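/- arXiv:2207.02829 — 4 statements merged into one kernel-verified Lean document; each statement's English description precedes it below -/
import Mathlib

section
/- Fix positive constants L_f, L_y, M_f, D, E_0 and a stepsize α with 0 < α ≤ 1/(2·L_f). Then there exists a constant C > 0, depending only on (L_f, L_y, M_f, D, α, E_0) and not on T, with the following property. Let X ⊆ ℝ^{d1} be nonempty, closed and convex with diameter at most D, let T ≥ 1, and for each t ∈ {1,…,T}: let φ_t : ℝ^{d1} → ℝ be convex and differentiable on ℝ^{d1} with ∇φ_t L_f-Lipschitz on ℝ^{d1}; let x*_t ∈ X satisfy the vanishing-gradient condition ∇φ_t(x*_t) = 0 (so x*_t minimizes φ_t over X); and let y*_t : ℝ^{d1} → ℝ^{d2} be L_y-Lipschitz. Suppose x_1 ∈ X, ‖y_1 − y*_1(x_1)‖ ≤ E_0, and for every t ∈ {1,…,T}: ‖y_{t+1} − y*_t(x_t)‖ ≤ ρ_t·‖y_t − y*_t(x_t)‖ with ρ_t := 1/(2t²), and x_{t+1} = Π_X(x_t − α·g̃_t) for some g̃_t ∈ ℝ^{d1} with ‖g̃_t − ∇φ_t(x_t)‖ ≤ M_f·‖y_{t+1} − y*_t(x_t)‖.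 Then Σ_{t=1}^T (φ_t(x_t) − φ_t(x*_t)) ≤ C·( 1 + P_{1,T} + Y_{1,T} + Y_{2,T} ). -/
open Finset

section Helpers
open Set Filter Topology InnerProductSpace

variable {E : Type*} [NormedAddCommGroup E] [InnerProductSpace ℝ E] [CompleteSpace E]

local notation "⟪" x ", " y "⟫" => @inner ℝ _ _ x y

lemma grad_inner (φ : E → ℝ) (x v : E) :
    ⟪gradient φ x, v⟫ = fderiv ℝ φ x v := by
  rw [gradient, toDual_symm_apply]

lemma path_hasDerivAt (φ : E → ℝ) (h : Differentiable ℝ φ) (a v : E) (t : ℝ) :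
    HasDerivAt (fun s : ℝ => φ (a + s • v)) ⟪gradient φ (a + t • v), v⟫ t := by
  have hp : HasDerivAt (fun s : ℝ => a + s • v) v t := by
    simpa using ((hasDerivAt_id t).smul_const v).const_add a
  have := (h (a + t • v)).hasFDerivAt.comp_hasDerivAt t hp
  rw [grad_inner]; exact this

/-- First-order condition for convexity. -/
lemma convex_first_order (φ : E → ℝ) (hc : ConvexOn ℝ Set.univ φ)
    (h : Differentiable ℝ φ) (a b : E) :
    φ a + ⟪gradient φ a, b - a⟫ ≤ φ b := by
  set v := b - a with hv
  set ψ : ℝ → ℝ := fun s => φ (a + s • v) with hψ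
  have hd : HasDerivWithinAt ψ ⟪gradient φ a, v⟫ (Set.Ioi 0) 0 := by
    have := path_hasDerivAt φ h a v 0
    simpa using this.hasDerivWithinAt
  rw [hasDerivWithinAt_iff_tendsto_slope] at hd
  have hIoi : (Set.Ioi (0:ℝ)) \ {0} = Set.Ioi 0 := by
    apply Set.diff_singleton_eq_self; simp
  rw [hIoi] at hd
  have hev : ∀ᶠ t in 𝓝[Set.Ioi (0:ℝ)] 0, slope ψ 0 t ≤ φ b - φ a := by
    have h1 : ∀ᶠ t in 𝓝[Set.Ioi (0:ℝ)] 0, t < 1 :=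
      ((Filter.tendsto_id.eventually_lt_const (by norm_num : (0:ℝ) < 1))).filter_mono
        nhdsWithin_le_nhds
    filter_upwards [eventually_mem_nhdsWithin, h1] with t ht ht1
    have ht0 : 0 < t := ht
    have hcvx := hc.2 (Set.mem_univ a) (Set.mem_univ b) (by linarith : (0:ℝ) ≤ 1 - t)
      (le_of_lt ht0) (by ring)
    have harg : (1 - t) • a + t • b = a + t • v := by
      rw [hv]; module
    have hψt : ψ t ≤ (1 - t) * φ a + t * φ b := by
      rw [hψ]; simpa [harg] using hcvx
    have hψ0 : ψ 0 = φ a := by simp [hψ]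
    rw [slope_def_field]
    have hle : ψ t - ψ 0 ≤ t * (φ b - φ a) := by rw [hψ0]; nlinarith
    rw [div_le_iff₀ (by linarith : (0:ℝ) < t - 0)]
    nlinarith
  have := le_of_tendsto hd hev
  linarith [this]

/-- Descent lemma with sharp constant L/2. -/
lemma descent_lemma (φ : E → ℝ) (h : Differentiable ℝ φ) {L : ℝ} (hL : 0 < L)
    (hlip : ∀ a b, ‖gradient φ a - gradient φ b‖ ≤ L * ‖a - b‖) (a b : E) :
    φ b ≤ φ a + ⟪gradient φ a, b - a⟫ + L / 2 * ‖b - a‖ ^ 2 := by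
  set v := b - a with hv
  have hcontg : Continuous (gradient φ) := by
    have : LipschitzWith (Real.toNNReal L) (gradient φ) := by
      apply LipschitzWith.of_dist_le_mul
      intro x y
      rw [dist_eq_norm, dist_eq_norm, Real.coe_toNNReal L hL.le]
      exact hlip x y
    exact this.continuous
  set F : ℝ → ℝ := fun t => ⟪gradient φ (a + t • v), v⟫ with hF
  have hFcont : Continuous F := by
    apply Continuous.inner
    · exact hcontg.comp (by continuity)
    · exact continuous_const
  have hFTC : ∫ t in (0:ℝ)..1, F t = φ b - φ a := by
    have := intervalIntegral.integral_eq_sub_of_hasDerivAt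
      (a := (0:ℝ)) (b := (1:ℝ)) (f := fun s : ℝ => φ (a + s • v)) (f' := F)
      (fun t _ => path_hasDerivAt φ h a v t) (hFcont.intervalIntegrable 0 1)
    simpa [hv] using this
  have hbound : ∫ t in (0:ℝ)..1, F t ≤ ∫ t in (0:ℝ)..1, (F 0 + (L * ‖v‖ ^ 2) * t) := by
    apply intervalIntegral.integral_mono_on (by norm_num) (hFcont.intervalIntegrable _ _)
      (by apply Continuous.intervalIntegrable; continuity)
    intro t ht
    have h1 : F t - F 0 = ⟪gradient φ (a + t • v) - gradient φ (a + (0:ℝ) • v), v⟫ := by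
      rw [inner_sub_left]
    have h2 : ⟪gradient φ (a + t • v) - gradient φ (a + (0:ℝ) • v), v⟫ ≤ L * t * ‖v‖ ^ 2 := by
      calc _ ≤ ‖gradient φ (a + t • v) - gradient φ (a + (0:ℝ) • v)‖ * ‖v‖ :=
            real_inner_le_norm _ _
        _ ≤ (L * ‖(a + t • v) - (a + (0:ℝ) • v)‖) * ‖v‖ := by
            apply mul_le_mul_of_nonneg_right (hlip _ _) (norm_nonneg _)
        _ = L * t * ‖v‖ ^ 2 := by
            have : (a + t • v) - (a + (0:ℝ) • v) = t • v := by module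
            rw [this, norm_smul]
            simp [abs_of_nonneg ht.1]
            ring
    nlinarith [h1, h2]
  have hR : ∫ t in (0:ℝ)..1, (F 0 + (L * ‖v‖ ^ 2) * t) = F 0 + (L * ‖v‖ ^ 2) / 2 := by
    rw [intervalIntegral.integral_add intervalIntegrable_const
      (by apply Continuous.intervalIntegrable; continuity)]
    rw [intervalIntegral.integral_const_mul, integral_id]
    ring_nf
    norm_num
    ring
  have hF0 : F 0 = ⟪gradient φ a, v⟫ := by simp [hF]
  rw [hFTC, hR, hF0] at hbound
  linarith

/-- Lower bound for convex functions with Lipschitz gradient. -/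
lemma lower_bound (φ : E → ℝ) (hc : ConvexOn ℝ Set.univ φ) (h : Differentiable ℝ φ)
    {L : ℝ} (hL : 0 < L)
    (hlip : ∀ a b, ‖gradient φ a - gradient φ b‖ ≤ L * ‖a - b‖) (a b : E) :
    φ a + ⟪gradient φ a, b - a⟫ + 1 / (2 * L) * ‖gradient φ b - gradient φ a‖ ^ 2 ≤ φ b := by
  set d := gradient φ b - gradient φ a with hd
  set w := b - L⁻¹ • d with hw
  have h1 := convex_first_order φ hc h a w
  have h2 := descent_lemma φ h hL hlip b w
  have e1 : w - b = -(L⁻¹ • d) := by rw [hw]; module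
  have e2 : ⟪gradient φ b, w - b⟫ = -(L⁻¹ * ⟪gradient φ b, d⟫) := by
    rw [e1, inner_neg_right, real_inner_smul_right]
  have e3 : ‖w - b‖ ^ 2 = L⁻¹ ^ 2 * ‖d‖ ^ 2 := by
    rw [e1, norm_neg, norm_smul]
    rw [mul_pow, Real.norm_eq_abs, sq_abs]
  have e4 : w - a = (b - a) - L⁻¹ • d := by rw [hw]; module
  have e5 : ⟪gradient φ a, w - a⟫ = ⟪gradient φ a, b - a⟫ - L⁻¹ * ⟪gradient φ a, d⟫ := by
    rw [e4, inner_sub_right, real_inner_smul_right]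
  have e6 : ⟪gradient φ b, d⟫ - ⟪gradient φ a, d⟫ = ‖d‖ ^ 2 := by
    rw [← inner_sub_left, ← hd, real_inner_self_eq_norm_sq]
  have hLinv : L⁻¹ * L = 1 := inv_mul_cancel₀ hL.ne'
  have h12 : φ a + ⟪gradient φ a, w - a⟫ ≤ φ b + ⟪gradient φ b, w - b⟫ + L / 2 * ‖w - b‖ ^ 2 :=
    le_trans h1 h2
  rw [e2, e3, e5] at h12
  have key : 1 / (2 * L) * ‖d‖ ^ 2 = L⁻¹ * ‖d‖ ^ 2 - L / 2 * (L⁻¹ ^ 2 * ‖d‖ ^ 2) := by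
    field_simp
    ring
  nlinarith [h12, e6]

/-- Co-coercivity at a stationary point. -/
lemma coco (φ : E → ℝ) (hc : ConvexOn ℝ Set.univ φ) (h : Differentiable ℝ φ)
    {L : ℝ} (hL : 0 < L)
    (hlip : ∀ a b, ‖gradient φ a - gradient φ b‖ ≤ L * ‖a - b‖) (a u : E)
    (hu : gradient φ u = 0) :
    ‖gradient φ a‖ ^ 2 ≤ L * ⟪gradient φ a, a - u⟫ := by
  have h1 := lower_bound φ hc h hL hlip a u
  have h2 := lower_bound φ hc h hL hlip u a
  rw [hu] at h1 h2
  simp only [zero_sub, sub_zero, norm_neg, inner_zero_left] at h1 h2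
  have e : ⟪gradient φ a, u - a⟫ = -⟪gradient φ a, a - u⟫ := by
    rw [← inner_neg_right]; congr 1; module
  rw [e] at h1
  have hL2 : 0 < 2 * L := by linarith
  have : 1 / (2 * L) * ‖gradient φ a‖ ^ 2 * 2 ≤ ⟪gradient φ a, a - u⟫ := by linarith
  calc ‖gradient φ a‖ ^ 2 = L * (1 / (2 * L) * ‖gradient φ a‖ ^ 2 * 2) := by
        field_simp
    _ ≤ L * ⟪gradient φ a, a - u⟫ := by
        apply mul_le_mul_of_nonneg_left this hL.le

/-- Projection bound. -/
lemma proj_bound {X : Set E} (hXc : Convex ℝ X) (q p u : E) (hq : q ∈ X) (hu : u ∈ X)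
    (hmin : ∀ z ∈ X, ‖q - p‖ ≤ ‖z - p‖) : ‖q - u‖ ^ 2 ≤ ‖p - u‖ ^ 2 := by
  haveI : Nonempty X := ⟨⟨q, hq⟩⟩
  have heq : ‖p - q‖ = ⨅ w : X, ‖p - w‖ := by
    apply le_antisymm
    · apply le_ciInf
      intro w
      rw [norm_sub_rev p q, norm_sub_rev p w]
      exact hmin w w.2
    · exact ciInf_le (f := fun w : X => ‖p - (w:E)‖) ⟨0, by rintro _ ⟨w, rfl⟩; positivity⟩ ⟨q, hq⟩
  have hVI := (norm_eq_iInf_iff_real_inner_le_zero hXc hq).mp heq u hu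
  have hexp : ‖p - u‖ ^ 2 = ‖p - q‖ ^ 2 - 2 * ⟪p - q, u - q⟫ + ‖u - q‖ ^ 2 := by
    have : p - u = (p - q) - (u - q) := by module
    rw [this, norm_sub_sq_real]
  rw [norm_sub_rev q u]
  linarith [hVI, hexp, sq_nonneg ‖p - q‖]

/-- Per-step regret bound. -/
lemma step_bound (φ : E → ℝ) (hc : ConvexOn ℝ Set.univ φ) (h : Differentiable ℝ φ)
    {L α D : ℝ} (hL : 0 < L) (hα0 : 0 < α) (hα : α ≤ 1 / (2 * L))
    (hlip : ∀ a b, ‖gradient φ a - gradient φ b‖ ≤ L * ‖a - b‖)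
    {X : Set E} (hXc : Convex ℝ X) (hdiam : ∀ a ∈ X, ∀ b ∈ X, ‖a - b‖ ≤ D)
    (a u q gv : E) (ha : a ∈ X) (hu : u ∈ X) (hq : q ∈ X) (hgradu : gradient φ u = 0)
    (hmin : ∀ z ∈ X, ‖q - (a - α • gv)‖ ≤ ‖z - (a - α • gv)‖) :
    φ a - φ u ≤ (1 / α) * (‖a - u‖ ^ 2 - ‖q - u‖ ^ 2)
      + 2 * α * ‖gv - gradient φ a‖ ^ 2 + 2 * D * ‖gv - gradient φ a‖ := by
  set G := gradient φ a with hG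
  set e := gv - G with he
  set S := ⟪G, a - u⟫ with hSdef
  have hproj : ‖q - u‖ ^ 2 ≤ ‖(a - α • gv) - u‖ ^ 2 :=
    proj_bound hXc q (a - α • gv) u hq hu hmin
  have hexpand : ‖(a - α • gv) - u‖ ^ 2
      = ‖a - u‖ ^ 2 - 2 * α * ⟪gv, a - u⟫ + α ^ 2 * ‖gv‖ ^ 2 := by
    have harg : (a - α • gv) - u = (a - u) - α • gv := by module
    rw [harg, norm_sub_sq_real, real_inner_smul_right, norm_smul, Real.norm_eq_abs,
      abs_of_pos hα0, real_inner_comm]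
    ring
  have hA : 2 * α * ⟪gv, a - u⟫ ≤ (‖a - u‖ ^ 2 - ‖q - u‖ ^ 2) + α ^ 2 * ‖gv‖ ^ 2 := by
    linarith [hproj, hexpand]
  have hSsplit : S = ⟪gv, a - u⟫ - ⟪e, a - u⟫ := by
    rw [hSdef, he, ← inner_sub_left]
    congr 1
    module
  have hDa : ‖a - u‖ ≤ D := hdiam a ha u hu
  have hinner_e : |⟪e, a - u⟫| ≤ ‖e‖ * D := by
    calc |⟪e, a - u⟫| ≤ ‖e‖ * ‖a - u‖ := abs_real_inner_le_norm _ _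
      _ ≤ ‖e‖ * D := mul_le_mul_of_nonneg_left hDa (norm_nonneg _)
  have hg2 : ‖gv‖ ^ 2 ≤ 2 * ‖G‖ ^ 2 + 2 * ‖e‖ ^ 2 := by
    have : ‖gv‖ ≤ ‖G‖ + ‖e‖ := by
      have : gv = G + e := by rw [he]; module
      rw [this]; exact norm_add_le _ _
    nlinarith [sq_nonneg (‖G‖ - ‖e‖), mul_self_le_mul_self (norm_nonneg gv) this]
  have hcoco' : ‖G‖ ^ 2 ≤ L * S := coco φ hc h hL hlip a u hgradu
  have hS0 : 0 ≤ S := by nlinarith [sq_nonneg ‖G‖, hL]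
  have hαL : α * L ≤ 1 / 2 := by
    rw [le_div_iff₀ (by linarith : (0:ℝ) < 2 * L)] at hα
    linarith
  have hGabsorb : 2 * α ^ 2 * ‖G‖ ^ 2 ≤ α * S := by
    nlinarith [mul_le_mul_of_nonneg_left hcoco' (by positivity : (0:ℝ) ≤ α ^ 2),
      mul_le_mul_of_nonneg_right hαL (mul_nonneg hα0.le hS0)]
  have hmain : α * S ≤ (‖a - u‖ ^ 2 - ‖q - u‖ ^ 2) + 2 * α ^ 2 * ‖e‖ ^ 2
      + 2 * α * D * ‖e‖ := by
    nlinarith [hA, hSsplit, hinner_e, hg2, hGabsorb, abs_le.mp hinner_e,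
      mul_le_mul_of_nonneg_left hg2 (by positivity : (0:ℝ) ≤ α ^ 2)]
  have hfo := convex_first_order φ hc h a u
  have hfo' : φ a - φ u ≤ S := by
    have : ⟪G, u - a⟫ = -S := by
      rw [hSdef, ← inner_neg_right]; congr 1; module
    linarith [hfo, this]
  have hfinal : S ≤ (1 / α) * (‖a - u‖ ^ 2 - ‖q - u‖ ^ 2) + 2 * α * ‖e‖ ^ 2 + 2 * D * ‖e‖ := by
    rw [← mul_le_mul_iff_right₀ hα0]
    calc α * S ≤ (‖a - u‖ ^ 2 - ‖q - u‖ ^ 2) + 2 * α ^ 2 * ‖e‖ ^ 2 + 2 * α * D * ‖e‖ := hmain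
      _ = α * ((1 / α) * (‖a - u‖ ^ 2 - ‖q - u‖ ^ 2) + 2 * α * ‖e‖ ^ 2 + 2 * D * ‖e‖) := by
          field_simp
  linarith


end Helpers

lemma telescope_aux (a b c : ℕ → ℝ) (A : ℝ) (hb : ∀ t, 0 ≤ b t) :
    ∀ T, 1 ≤ T → a 1 ≤ A → (∀ t, 2 ≤ t → t ≤ T → a t - b (t - 1) ≤ c t) →
    (∑ t ∈ Icc 1 T, (a t - b t)) ≤ A + ∑ t ∈ Icc 2 T, c t := by
  have key : ∀ T, 1 ≤ T → a 1 ≤ A → (∀ t, 2 ≤ t → t ≤ T → a t - b (t - 1) ≤ c t) →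
      (∑ t ∈ Icc 1 T, (a t - b t)) + b T ≤ A + ∑ t ∈ Icc 2 T, c t := by
    intro T hT
    induction T, hT using Nat.le_induction with
    | base =>
      intro ha1 _
      simp [ha1]
    | succ n hn ih =>
      intro ha1 hstep
      have h1 : (1:ℕ) ≤ n + 1 := by omega
      have h2 : (2:ℕ) ≤ n + 1 := by omega
      rw [Finset.sum_Icc_succ_top h1, Finset.sum_Icc_succ_top h2]
      have ihh := ih ha1 (fun t h2t htn => hstep t h2t (by omega))
      have hlast := hstep (n + 1) h2 le_rfl
      simp only [Nat.add_sub_cancel] at hlast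
      linarith
  intro T hT ha1 hstep
  have := key T hT ha1 hstep
  linarith [hb T]

lemma invsq_sum : ∀ T : ℕ, 1 ≤ T → ∑ t ∈ Icc 1 T, (1 / (t:ℝ) ^ 2) ≤ 2 - 1 / (T:ℝ) := by
  intro T hT
  induction T, hT using Nat.le_induction with
  | base => push_cast; norm_num
  | succ n hn ih =>
    have h1 : (1:ℕ) ≤ n + 1 := by omega
    rw [Finset.sum_Icc_succ_top h1]
    have hn0 : (0:ℝ) < n := by exact_mod_cast hn
    have hn10 : (0:ℝ) < (n:ℝ) + 1 := by linarith
    have hkey : 1 / ((n:ℝ) + 1) ^ 2 ≤ 1 / (n:ℝ) - 1 / ((n:ℝ) + 1) := by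
      have heq : 1 / (n:ℝ) - 1 / ((n:ℝ) + 1) = 1 / ((n:ℝ) * ((n:ℝ) + 1)) := by
        field_simp
        ring
      rw [heq]
      apply one_div_le_one_div_of_le (by positivity)
      nlinarith
    push_cast
    push_cast at ih
    linarith

lemma invquart_sum : ∀ T : ℕ, 1 ≤ T → ∑ t ∈ Icc 1 T, (1 / (t:ℝ) ^ 4) ≤ 2 := by
  intro T hT
  have h1 : ∑ t ∈ Icc 1 T, (1 / (t:ℝ) ^ 4) ≤ ∑ t ∈ Icc 1 T, (1 / (t:ℝ) ^ 2) := by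
    apply Finset.sum_le_sum
    intro t ht
    rw [Finset.mem_Icc] at ht
    have ht1 : (1:ℝ) ≤ t := by exact_mod_cast ht.1
    apply one_div_le_one_div_of_le (by positivity)
    nlinarith [ht1, sq_nonneg ((t:ℝ)^2 - (t:ℝ)), sq_nonneg ((t:ℝ) - 1)]
  have h2 := invsq_sum T hT
  have hT0 : (0:ℝ) < T := by exact_mod_cast hT
  have : 0 < 1 / (T:ℝ) := by positivity
  linarith

lemma seq_invariant (T : ℕ) (ε η δ : ℕ → ℝ) (B : ℝ) (hB : 0 < B) (hδ : ∀ t, 0 ≤ δ t)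
    (hcon : ∀ n, 1 ≤ n → n ≤ T → ε n ≤ 1 / (2 * (n:ℝ) ^ 2) * η n)
    (hη1 : η 1 ≤ B) (hηs : ∀ n, 1 ≤ n → n + 1 ≤ T → η (n + 1) ≤ ε n + B + δ (n + 1)) :
    ∀ n, 1 ≤ n → n ≤ T → ε n ≤ (B + ∑ s ∈ Icc 2 n, δ s) / (n:ℝ) ^ 2 := by
  intro n hn
  induction n, hn using Nat.le_induction with
  | base =>
    intro h1T
    have h1 : ε 1 ≤ 1 / 2 * η 1 := by simpa using hcon 1 le_rfl h1T
    have h2 : (Finset.Icc 2 1 : Finset ℕ) = ∅ := Finset.Icc_eq_empty (by omega)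
    rw [h2]
    simp only [Finset.sum_empty, add_zero, Nat.cast_one, one_pow, div_one]
    linarith
  | succ n hn ih =>
    intro hn1T
    have hnT : n ≤ T := by omega
    have ihn := ih hnT
    set W : ℝ := B + ∑ s ∈ Icc 2 n, δ s with hW
    have hW0 : B ≤ W := by
      rw [hW]
      have : 0 ≤ ∑ s ∈ Icc 2 n, δ s := Finset.sum_nonneg fun s _ => hδ s
      linarith
    have hWsucc : B + ∑ s ∈ Icc 2 (n + 1), δ s = W + δ (n + 1) := by
      rw [hW, Finset.sum_Icc_succ_top (by omega : (2:ℕ) ≤ n + 1)]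
      ring
    have hn0 : (1:ℝ) ≤ (n:ℝ) := by exact_mod_cast hn
    have hcon1 := hcon (n + 1) (by omega) hn1T
    have hη := hηs n hn hn1T
    have hdiv : W / (n:ℝ) ^ 2 ≤ W := by
      apply div_le_self (by linarith) (by nlinarith)
    have hεn : ε n ≤ W := le_trans (ihn) hdiv
    have hnn : ((n:ℕ) + 1 : ℝ) = (n:ℝ) + 1 := by push_cast; ring
    have hcast : ((n + 1 : ℕ) : ℝ) = (n:ℝ) + 1 := by push_cast; ring
    rw [hWsucc, hcast]
    rw [hcast] at hcon1
    have hp : (0:ℝ) < ((n:ℝ) + 1) ^ 2 := by positivity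
    calc ε (n + 1) ≤ 1 / (2 * ((n:ℝ) + 1) ^ 2) * η (n + 1) := hcon1
      _ ≤ 1 / (2 * ((n:ℝ) + 1) ^ 2) * (2 * (W + δ (n + 1))) := by
          apply mul_le_mul_of_nonneg_left _ (by positivity)
          have := hδ (n + 1)
          linarith
      _ = (W + δ (n + 1)) / ((n:ℝ) + 1) ^ 2 := by field_simp

set_option maxHeartbeats 1000000 in
lemma seq_invariant_sq (T : ℕ) (ε η δ : ℕ → ℝ) (B : ℝ) (hB : 0 < B) (hδ : ∀ t, 0 ≤ δ t)
    (hε : ∀ t, 0 ≤ ε t) (hηn : ∀ t, 0 ≤ η t)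
    (hcon : ∀ n, 1 ≤ n → n ≤ T → ε n ≤ 1 / (2 * (n:ℝ) ^ 2) * η n)
    (hη1 : η 1 ≤ B) (hηs : ∀ n, 1 ≤ n → n + 1 ≤ T → η (n + 1) ≤ ε n + B + δ (n + 1)) :
    ∀ n, 1 ≤ n → n ≤ T →
      ε n ^ 2 ≤ (3 * B ^ 2 + 3 * ∑ s ∈ Icc 2 n, (δ s) ^ 2) / (n:ℝ) ^ 4 := by
  intro n hn
  induction n, hn using Nat.le_induction with
  | base =>
    intro h1T
    have h1 : ε 1 ≤ 1 / 2 * η 1 := by simpa using hcon 1 le_rfl h1T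
    have h2 : (Finset.Icc 2 1 : Finset ℕ) = ∅ := Finset.Icc_eq_empty (by omega)
    rw [h2]
    simp only [Finset.sum_empty, mul_zero, add_zero, Nat.cast_one, one_pow, div_one]
    nlinarith [hε 1, hηn 1, hη1, hB]
  | succ n hn ih =>
    intro hn1T
    have hnT : n ≤ T := by omega
    have ihn := ih hnT
    set W2 : ℝ := 3 * B ^ 2 + 3 * ∑ s ∈ Icc 2 n, (δ s) ^ 2 with hW2def
    have hW2B : 3 * B ^ 2 ≤ W2 := by
      have : (0:ℝ) ≤ ∑ s ∈ Icc 2 n, (δ s) ^ 2 := Finset.sum_nonneg fun s _ => sq_nonneg _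
      rw [hW2def]; linarith
    have hW2succ : 3 * B ^ 2 + 3 * ∑ s ∈ Icc 2 (n + 1), (δ s) ^ 2 = W2 + 3 * δ (n + 1) ^ 2 := by
      rw [hW2def, Finset.sum_Icc_succ_top (by omega : (2:ℕ) ≤ n + 1)]
      ring
    have hn0 : (1:ℝ) ≤ (n:ℝ) := by exact_mod_cast hn
    have hcast : ((n + 1 : ℕ) : ℝ) = (n:ℝ) + 1 := by push_cast; ring
    set m : ℝ := (n:ℝ) + 1 with hm
    have hm1 : (1:ℝ) ≤ m := by rw [hm]; linarith
    have hm0 : (0:ℝ) < m := by linarith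
    have hcon1 : ε (n + 1) ≤ 1 / (2 * m ^ 2) * η (n + 1) := by
      have := hcon (n + 1) (by omega) hn1T
      rwa [hcast] at this
    have hη := hηs n hn hn1T
    have hn4 : (1:ℝ) ≤ (n:ℝ) ^ 4 := one_le_pow₀ hn0
    have hdiv : W2 / (n:ℝ) ^ 4 ≤ W2 := div_le_self (by nlinarith) hn4
    have hεn2 : ε n ^ 2 ≤ W2 := le_trans ihn hdiv
    have hη2 : η (n + 1) ^ 2 ≤ 3 * (ε n ^ 2 + B ^ 2 + δ (n + 1) ^ 2) := by
      nlinarith [hηn (n+1), hε n, hδ (n+1), hB, hη, sq_nonneg (ε n - B),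
        sq_nonneg (ε n - δ (n+1)), sq_nonneg (B - δ (n+1))]
    rw [hW2succ, hcast]
    have hsq : ε (n + 1) ^ 2 ≤ (1 / (2 * m ^ 2)) ^ 2 * η (n + 1) ^ 2 := by
      have h1 : ε (n + 1) * ε (n + 1) ≤ (1 / (2 * m ^ 2) * η (n + 1)) * (1 / (2 * m ^ 2) * η (n + 1)) :=
        mul_le_mul hcon1 hcon1 (hε _) (mul_nonneg (by positivity) (hηn _))
      calc ε (n + 1) ^ 2 = ε (n + 1) * ε (n + 1) := by ring
        _ ≤ (1 / (2 * m ^ 2) * η (n + 1)) * (1 / (2 * m ^ 2) * η (n + 1)) := h1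
        _ = (1 / (2 * m ^ 2)) ^ 2 * η (n + 1) ^ 2 := by ring
    calc ε (n + 1) ^ 2 ≤ (1 / (2 * m ^ 2)) ^ 2 * η (n + 1) ^ 2 := hsq
      _ ≤ (1 / (2 * m ^ 2)) ^ 2 * (3 * (W2 + B ^ 2 + δ (n + 1) ^ 2)) := by
          apply mul_le_mul_of_nonneg_left _ (by positivity)
          linarith [hη2, hεn2]
      _ ≤ (W2 + 3 * δ (n + 1) ^ 2) / m ^ 4 := by
          have hmp : (0:ℝ) < m ^ 4 := by positivity
          have heq : (1 / (2 * m ^ 2)) ^ 2 * (3 * (W2 + B ^ 2 + δ (n + 1) ^ 2))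
              = (3 * (W2 + B ^ 2 + δ (n + 1) ^ 2)) / (4 * m ^ 4) := by
            field_simp; ring
          rw [heq]
          rw [div_le_div_iff₀ (by positivity) (by positivity)]
          nlinarith [mul_nonneg (sub_nonneg.mpr hW2B) hmp.le, mul_nonneg (sq_nonneg (δ (n+1))) hmp.le]




set_option maxHeartbeats 1000000 in
/-- Dynamic regret bound for the online alternating (projected) gradient method with
convex smooth outer losses under the vanishing-gradient condition, with inner
contraction factors `ρ_t = 1/(2t²)`:
`BD-Regret_T = O(1 + P_{1,T} + Y_{1,T} + Y_{2,T})`. -/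
theorem convex_dynamic_regret
    (Lf Ly Mf D E0 α : ℝ)
    (hLf : 0 < Lf) (hLy : 0 < Ly) (hMf : 0 < Mf) (hD : 0 < D) (hE0 : 0 < E0)
    (hα0 : 0 < α) (hα : α ≤ 1 / (2 * Lf)) :
    ∃ C > 0, ∀ (d1 d2 T : ℕ), 1 ≤ T →
      ∀ (X : Set (EuclideanSpace ℝ (Fin d1))), X.Nonempty → IsClosed X → Convex ℝ X →
      (∀ a ∈ X, ∀ b ∈ X, ‖a - b‖ ≤ D) →
      ∀ (φ : ℕ → EuclideanSpace ℝ (Fin d1) → ℝ)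
        (xstar x : ℕ → EuclideanSpace ℝ (Fin d1))
        (ystar : ℕ → EuclideanSpace ℝ (Fin d1) → EuclideanSpace ℝ (Fin d2))
        (y : ℕ → EuclideanSpace ℝ (Fin d2))
        (g : ℕ → EuclideanSpace ℝ (Fin d1)),
      -- φ_t convex and differentiable on ℝ^{d1}
      (∀ t ∈ Finset.Icc 1 T, ConvexOn ℝ Set.univ (φ t)) →
      (∀ t ∈ Finset.Icc 1 T, Differentiable ℝ (φ t)) →
      -- Lf-Lipschitz gradient on all of ℝ^{d1}
      (∀ t ∈ Finset.Icc 1 T, ∀ a b,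
        ‖gradient (φ t) a - gradient (φ t) b‖ ≤ Lf * ‖a - b‖) →
      -- x*_t ∈ X with vanishing gradient
      (∀ t ∈ Finset.Icc 1 T, xstar t ∈ X ∧ gradient (φ t) (xstar t) = 0) →
      -- y*_t is Ly-Lipschitz
      (∀ t ∈ Finset.Icc 1 T, ∀ a b, ‖ystar t a - ystar t b‖ ≤ Ly * ‖a - b‖) →
      x 1 ∈ X →
      ‖y 1 - ystar 1 (x 1)‖ ≤ E0 →
      -- inner contraction with ρ_t = 1/(2t²)
      (∀ t ∈ Finset.Icc 1 T, ‖y (t + 1) - ystar t (x t)‖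
        ≤ (1 / (2 * (t : ℝ) ^ 2)) * ‖y t - ystar t (x t)‖) →
      -- approximate hypergradient and projected update
      (∀ t ∈ Finset.Icc 1 T,
        ‖g t - gradient (φ t) (x t)‖ ≤ Mf * ‖y (t + 1) - ystar t (x t)‖ ∧
        x (t + 1) ∈ X ∧
        ∀ z ∈ X, ‖x (t + 1) - (x t - α • g t)‖ ≤ ‖z - (x t - α • g t)‖) →
      ∑ t ∈ Finset.Icc 1 T, (φ t (x t) - φ t (xstar t))
        ≤ C * (1 + (∑ t ∈ Finset.Icc 2 T, ‖xstar (t - 1) - xstar t‖)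
            + (∑ t ∈ Finset.Icc 2 T,
                ‖ystar (t - 1) (xstar (t - 1)) - ystar t (xstar t)‖)
            + ∑ t ∈ Finset.Icc 2 T,
                ‖ystar (t - 1) (xstar (t - 1)) - ystar t (xstar t)‖ ^ 2) := by
  set B : ℝ := E0 + 2 * Ly * D with hBdef
  have hB : 0 < B := by positivity
  refine ⟨1 + D ^ 2 / α + 2 * D / α + 12 * α * Mf ^ 2 * B ^ 2 + 12 * α * Mf ^ 2
    + 4 * D * Mf * B + 4 * D * Mf, by positivity, ?_⟩
  set C : ℝ := 1 + D ^ 2 / α + 2 * D / α + 12 * α * Mf ^ 2 * B ^ 2 + 12 * α * Mf ^ 2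
    + 4 * D * Mf * B + 4 * D * Mf with hCdef
  clear_value C
  intro d1 d2 T hT X hXne hXcl hXconv hdiam φ xstar x ystar y g
    hconv hdiff hlip hxstar hylip hx1 hy1 hcontr hupd
  set ε : ℕ → ℝ := fun t => ‖y (t + 1) - ystar t (x t)‖ with hεdef
  set η : ℕ → ℝ := fun t => ‖y t - ystar t (x t)‖ with hηdef
  set δ : ℕ → ℝ := fun t => ‖ystar (t - 1) (xstar (t - 1)) - ystar t (xstar t)‖ with hδdef
  set P : ℝ := ∑ t ∈ Finset.Icc 2 T, ‖xstar (t - 1) - xstar t‖ with hPdef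
  set Y1 : ℝ := ∑ t ∈ Finset.Icc 2 T, δ t with hY1def
  set Y2 : ℝ := ∑ t ∈ Finset.Icc 2 T, (δ t) ^ 2 with hY2def
  have hδ0 : ∀ t, 0 ≤ δ t := fun t => norm_nonneg _
  have hε0 : ∀ t, 0 ≤ ε t := fun t => norm_nonneg _
  have hη0 : ∀ t, 0 ≤ η t := fun t => norm_nonneg _
  have hP0 : 0 ≤ P := Finset.sum_nonneg fun t _ => norm_nonneg _
  have hY10 : 0 ≤ Y1 := Finset.sum_nonneg fun t _ => hδ0 t
  have hY20 : 0 ≤ Y2 := Finset.sum_nonneg fun t _ => sq_nonneg _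
  clear_value B P Y1 Y2
  -- membership of iterates
  have hxmem : ∀ t, 1 ≤ t → t ≤ T + 1 → x t ∈ X := by
    intro t ht
    induction t, ht using Nat.le_induction with
    | base => intro _; exact hx1
    | succ n hn ih =>
      intro hn1
      exact (hupd n (Finset.mem_Icc.mpr ⟨hn, by omega⟩)).2.1
  -- contraction restated
  have hcon' : ∀ n, 1 ≤ n → n ≤ T → ε n ≤ 1 / (2 * (n:ℝ) ^ 2) * η n := by
    intro n h1 h2
    exact hcontr n (Finset.mem_Icc.mpr ⟨h1, h2⟩)
  have hη1' : η 1 ≤ B := by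
    have : η 1 = ‖y 1 - ystar 1 (x 1)‖ := rfl
    rw [this, hBdef]
    nlinarith [hy1, mul_pos hLy hD]
  -- drift recursion for η
  have hηs : ∀ n, 1 ≤ n → n + 1 ≤ T → η (n + 1) ≤ ε n + B + δ (n + 1) := by
    intro n hn hn1
    have hmemn : n ∈ Finset.Icc 1 T := Finset.mem_Icc.mpr ⟨hn, by omega⟩
    have hmemn1 : n + 1 ∈ Finset.Icc 1 T := Finset.mem_Icc.mpr ⟨by omega, hn1⟩
    have hxn : x n ∈ X := hxmem n hn (by omega)
    have hxn1 : x (n + 1) ∈ X := hxmem (n + 1) (by omega) (by omega)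
    have hun : xstar n ∈ X := (hxstar n hmemn).1
    have hun1 : xstar (n + 1) ∈ X := (hxstar (n + 1) hmemn1).1
    have key : y (n + 1) - ystar (n + 1) (x (n + 1))
        = (y (n + 1) - ystar n (x n)) + ((ystar n (x n) - ystar n (xstar n))
          + ((ystar n (xstar n) - ystar (n + 1) (xstar (n + 1)))
          + (ystar (n + 1) (xstar (n + 1)) - ystar (n + 1) (x (n + 1))))) := by
      abel
    have hB1 : ‖ystar n (x n) - ystar n (xstar n)‖ ≤ Ly * D := by
      calc ‖ystar n (x n) - ystar n (xstar n)‖ ≤ Ly * ‖x n - xstar n‖ := hylip n hmemn _ _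
        _ ≤ Ly * D := mul_le_mul_of_nonneg_left (hdiam _ hxn _ hun) hLy.le
    have hB3 : ‖ystar (n + 1) (xstar (n + 1)) - ystar (n + 1) (x (n + 1))‖ ≤ Ly * D := by
      calc ‖ystar (n + 1) (xstar (n + 1)) - ystar (n + 1) (x (n + 1))‖
          ≤ Ly * ‖xstar (n + 1) - x (n + 1)‖ := hylip (n + 1) hmemn1 _ _
        _ ≤ Ly * D := mul_le_mul_of_nonneg_left (hdiam _ hun1 _ hxn1) hLy.le
    have hB2 : ‖ystar n (xstar n) - ystar (n + 1) (xstar (n + 1))‖ = δ (n + 1) := by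
      simp [hδdef]
    have hchain : η (n + 1) ≤ ε n + (Ly * D + (δ (n + 1) + Ly * D)) := by
      show ‖y (n + 1) - ystar (n + 1) (x (n + 1))‖ ≤ _
      rw [key]
      calc ‖_ + _‖ ≤ ‖y (n + 1) - ystar n (x n)‖ + ‖(ystar n (x n) - ystar n (xstar n))
            + ((ystar n (xstar n) - ystar (n + 1) (xstar (n + 1)))
            + (ystar (n + 1) (xstar (n + 1)) - ystar (n + 1) (x (n + 1))))‖ := norm_add_le _ _
        _ ≤ ε n + (‖ystar n (x n) - ystar n (xstar n)‖
            + ‖(ystar n (xstar n) - ystar (n + 1) (xstar (n + 1)))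
            + (ystar (n + 1) (xstar (n + 1)) - ystar (n + 1) (x (n + 1)))‖) := by
            apply add_le_add le_rfl (norm_add_le _ _)
        _ ≤ ε n + (Ly * D + (‖ystar n (xstar n) - ystar (n + 1) (xstar (n + 1))‖
            + ‖ystar (n + 1) (xstar (n + 1)) - ystar (n + 1) (x (n + 1))‖)) := by
            apply add_le_add le_rfl (add_le_add hB1 (norm_add_le _ _))
        _ ≤ ε n + (Ly * D + (δ (n + 1) + Ly * D)) := by
            apply add_le_add le_rfl (add_le_add le_rfl (add_le_add hB2.le hB3))
    rw [hBdef]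
    linarith
  -- the two invariants
  have hinv := seq_invariant T ε η δ B hB hδ0 hcon' hη1' hηs
  have hinv2 := seq_invariant_sq T ε η δ B hB hδ0 hε0 hη0 hcon' hη1' hηs
  -- sum bounds on the errors
  have hSe : ∑ t ∈ Finset.Icc 1 T, ε t ≤ 2 * (B + Y1) := by
    have h1 : ∀ t ∈ Finset.Icc 1 T, ε t ≤ (B + Y1) * (1 / (t:ℝ) ^ 2) := by
      intro t ht
      rw [Finset.mem_Icc] at ht
      have ht1 : (1:ℝ) ≤ (t:ℝ) := by exact_mod_cast ht.1
      have hnum : (B + ∑ s ∈ Finset.Icc 2 t, δ s) ≤ B + Y1 := by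
        rw [hY1def]
        have := Finset.sum_le_sum_of_subset_of_nonneg
          (Finset.Icc_subset_Icc_right ht.2 : Finset.Icc 2 t ⊆ Finset.Icc 2 T)
          (fun s _ _ => hδ0 s)
        linarith
      calc ε t ≤ (B + ∑ s ∈ Finset.Icc 2 t, δ s) / (t:ℝ) ^ 2 := hinv t ht.1 ht.2
        _ ≤ (B + Y1) / (t:ℝ) ^ 2 := by
            gcongr
        _ = (B + Y1) * (1 / (t:ℝ) ^ 2) := by ring
    calc ∑ t ∈ Finset.Icc 1 T, ε t ≤ ∑ t ∈ Finset.Icc 1 T, (B + Y1) * (1 / (t:ℝ) ^ 2) :=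
          Finset.sum_le_sum h1
      _ = (B + Y1) * ∑ t ∈ Finset.Icc 1 T, (1 / (t:ℝ) ^ 2) := (Finset.mul_sum _ _ _).symm
      _ ≤ (B + Y1) * 2 := by
          apply mul_le_mul_of_nonneg_left _ (by linarith)
          have h2 := invsq_sum T hT
          have hT0 : (0:ℝ) < T := by exact_mod_cast hT
          have : 0 < 1 / (T:ℝ) := by positivity
          linarith
      _ = 2 * (B + Y1) := by ring
  have hSe2 : ∑ t ∈ Finset.Icc 1 T, (ε t) ^ 2 ≤ 2 * (3 * B ^ 2 + 3 * Y2) := by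
    have h1 : ∀ t ∈ Finset.Icc 1 T, (ε t) ^ 2 ≤ (3 * B ^ 2 + 3 * Y2) * (1 / (t:ℝ) ^ 4) := by
      intro t ht
      rw [Finset.mem_Icc] at ht
      have ht1 : (1:ℝ) ≤ (t:ℝ) := by exact_mod_cast ht.1
      have hnum : (3 * B ^ 2 + 3 * ∑ s ∈ Finset.Icc 2 t, (δ s) ^ 2) ≤ 3 * B ^ 2 + 3 * Y2 := by
        rw [hY2def]
        have := Finset.sum_le_sum_of_subset_of_nonneg
          (Finset.Icc_subset_Icc_right ht.2 : Finset.Icc 2 t ⊆ Finset.Icc 2 T)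
          (fun s _ _ => sq_nonneg (δ s))
        linarith
      calc (ε t) ^ 2 ≤ (3 * B ^ 2 + 3 * ∑ s ∈ Finset.Icc 2 t, (δ s) ^ 2) / (t:ℝ) ^ 4 :=
            hinv2 t ht.1 ht.2
        _ ≤ (3 * B ^ 2 + 3 * Y2) / (t:ℝ) ^ 4 := by
            gcongr
        _ = (3 * B ^ 2 + 3 * Y2) * (1 / (t:ℝ) ^ 4) := by ring
    calc ∑ t ∈ Finset.Icc 1 T, (ε t) ^ 2
        ≤ ∑ t ∈ Finset.Icc 1 T, (3 * B ^ 2 + 3 * Y2) * (1 / (t:ℝ) ^ 4) := Finset.sum_le_sum h1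
      _ = (3 * B ^ 2 + 3 * Y2) * ∑ t ∈ Finset.Icc 1 T, (1 / (t:ℝ) ^ 4) := (Finset.mul_sum _ _ _).symm
      _ ≤ (3 * B ^ 2 + 3 * Y2) * 2 := by
          apply mul_le_mul_of_nonneg_left (invquart_sum T hT) (by positivity)
      _ = 2 * (3 * B ^ 2 + 3 * Y2) := by ring
  -- per-step bound
  set A : ℕ → ℝ := fun t => ‖x t - xstar t‖ ^ 2 with hAdef
  set Bf : ℕ → ℝ := fun t => ‖x (t + 1) - xstar t‖ ^ 2 with hBfdef
  have hstep : ∀ t ∈ Finset.Icc 1 T, φ t (x t) - φ t (xstar t)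
      ≤ (1 / α) * (A t - Bf t) + 2 * α * Mf ^ 2 * (ε t) ^ 2 + 2 * D * Mf * ε t := by
    intro t ht
    rw [Finset.mem_Icc] at ht
    have hxt : x t ∈ X := hxmem t ht.1 (by omega)
    have hxt1 : x (t + 1) ∈ X := hxmem (t + 1) (by omega) (by omega)
    have hmem : t ∈ Finset.Icc 1 T := Finset.mem_Icc.mpr ht
    obtain ⟨hgerr, _, hmin⟩ := hupd t hmem
    have hsb := step_bound (φ t) (hconv t hmem) (hdiff t hmem) hLf hα0 hα (hlip t hmem)
      hXconv hdiam (x t) (xstar t) (x (t + 1)) (g t) hxt (hxstar t hmem).1 hxt1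
      (hxstar t hmem).2 hmin
    have heε : ‖g t - gradient (φ t) (x t)‖ ≤ Mf * ε t := hgerr
    have he0 : (0:ℝ) ≤ ‖g t - gradient (φ t) (x t)‖ := norm_nonneg _
    have hMfε : (0:ℝ) ≤ Mf * ε t := mul_nonneg hMf.le (hε0 t)
    have h2' : ‖g t - gradient (φ t) (x t)‖ * ‖g t - gradient (φ t) (x t)‖
        ≤ (Mf * ε t) * (Mf * ε t) := mul_self_le_mul_self he0 heε
    have h2 : 2 * α * ‖g t - gradient (φ t) (x t)‖ ^ 2 ≤ 2 * α * Mf ^ 2 * (ε t) ^ 2 := by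
      calc 2 * α * ‖g t - gradient (φ t) (x t)‖ ^ 2
          = (2 * α) * (‖g t - gradient (φ t) (x t)‖ * ‖g t - gradient (φ t) (x t)‖) := by ring
        _ ≤ (2 * α) * ((Mf * ε t) * (Mf * ε t)) :=
            mul_le_mul_of_nonneg_left h2' (by positivity)
        _ = 2 * α * Mf ^ 2 * (ε t) ^ 2 := by ring
    have h3 : 2 * D * ‖g t - gradient (φ t) (x t)‖ ≤ 2 * D * Mf * ε t := by
      calc 2 * D * ‖g t - gradient (φ t) (x t)‖ ≤ 2 * D * (Mf * ε t) :=
            mul_le_mul_of_nonneg_left heε (by positivity)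
        _ = 2 * D * Mf * ε t := by ring
    calc φ t (x t) - φ t (xstar t)
        ≤ (1 / α) * (‖x t - xstar t‖ ^ 2 - ‖x (t + 1) - xstar t‖ ^ 2)
          + 2 * α * ‖g t - gradient (φ t) (x t)‖ ^ 2
          + 2 * D * ‖g t - gradient (φ t) (x t)‖ := hsb
      _ ≤ (1 / α) * (A t - Bf t) + 2 * α * Mf ^ 2 * (ε t) ^ 2 + 2 * D * Mf * ε t := by
          have : (1 / α) * (‖x t - xstar t‖ ^ 2 - ‖x (t + 1) - xstar t‖ ^ 2)
              = (1 / α) * (A t - Bf t) := rfl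
          rw [this]
          linarith
  -- telescoping
  have htel : ∑ t ∈ Finset.Icc 1 T, (A t - Bf t) ≤ D ^ 2 + 2 * D * P := by
    have hstep2 : ∀ t, 2 ≤ t → t ≤ T → A t - Bf (t - 1) ≤ 2 * D * ‖xstar (t - 1) - xstar t‖ := by
      intro t h2t htT
      have ht1 : t - 1 + 1 = t := by omega
      have hxt : x t ∈ X := hxmem t (by omega) (by omega)
      have hut : xstar t ∈ X := (hxstar t (Finset.mem_Icc.mpr ⟨by omega, htT⟩)).1
      have hut1 : xstar (t - 1) ∈ X :=
        (hxstar (t - 1) (Finset.mem_Icc.mpr ⟨by omega, by omega⟩)).1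
      have hBf : Bf (t - 1) = ‖x t - xstar (t - 1)‖ ^ 2 := by
        simp only [hBfdef, ht1]
      rw [hBf]
      have hp : ‖x t - xstar t‖ ≤ D := hdiam _ hxt _ hut
      have hq : ‖x t - xstar (t - 1)‖ ≤ D := hdiam _ hxt _ hut1
      have htri : ‖x t - xstar t‖ ≤ ‖x t - xstar (t - 1)‖ + ‖xstar (t - 1) - xstar t‖ := by
        have hdecomp : x t - xstar t = (x t - xstar (t - 1)) + (xstar (t - 1) - xstar t) := by
          abel
        rw [hdecomp]
        exact norm_add_le _ _
      have h1 : A t = ‖x t - xstar t‖ ^ 2 := rfl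
      rw [h1]
      nlinarith [norm_nonneg (x t - xstar t), norm_nonneg (x t - xstar (t - 1)),
        norm_nonneg (xstar (t - 1) - xstar t), hp, hq, htri, hD]
    have hA1 : A 1 ≤ D ^ 2 := by
      have : ‖x 1 - xstar 1‖ ≤ D :=
        hdiam _ (hxmem 1 le_rfl (by omega)) _ ((hxstar 1 (Finset.mem_Icc.mpr ⟨le_rfl, hT⟩)).1)
      have h0 : (0:ℝ) ≤ ‖x 1 - xstar 1‖ := norm_nonneg _
      show ‖x 1 - xstar 1‖ ^ 2 ≤ D ^ 2
      nlinarith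
    have := telescope_aux A Bf (fun t => 2 * D * ‖xstar (t - 1) - xstar t‖) (D ^ 2)
      (fun t => sq_nonneg _) T hT hA1 hstep2
    calc ∑ t ∈ Finset.Icc 1 T, (A t - Bf t)
        ≤ D ^ 2 + ∑ t ∈ Finset.Icc 2 T, 2 * D * ‖xstar (t - 1) - xstar t‖ := this
      _ = D ^ 2 + 2 * D * P := by rw [hPdef, Finset.mul_sum]
  -- assemble
  have hsum : ∑ t ∈ Finset.Icc 1 T, (φ t (x t) - φ t (xstar t))
      ≤ (1 / α) * (D ^ 2 + 2 * D * P) + 2 * α * Mf ^ 2 * (2 * (3 * B ^ 2 + 3 * Y2))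
        + 2 * D * Mf * (2 * (B + Y1)) := by
    calc ∑ t ∈ Finset.Icc 1 T, (φ t (x t) - φ t (xstar t))
        ≤ ∑ t ∈ Finset.Icc 1 T, ((1 / α) * (A t - Bf t) + 2 * α * Mf ^ 2 * (ε t) ^ 2
            + 2 * D * Mf * ε t) := Finset.sum_le_sum hstep
      _ = (1 / α) * (∑ t ∈ Finset.Icc 1 T, (A t - Bf t))
          + 2 * α * Mf ^ 2 * (∑ t ∈ Finset.Icc 1 T, (ε t) ^ 2)
          + 2 * D * Mf * (∑ t ∈ Finset.Icc 1 T, ε t) := by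
          rw [Finset.sum_add_distrib, Finset.sum_add_distrib, Finset.mul_sum,
            Finset.mul_sum, Finset.mul_sum]
      _ ≤ (1 / α) * (D ^ 2 + 2 * D * P) + 2 * α * Mf ^ 2 * (2 * (3 * B ^ 2 + 3 * Y2))
          + 2 * D * Mf * (2 * (B + Y1)) := by
          have c1 : (0:ℝ) ≤ 1 / α := by positivity
          have c2 : (0:ℝ) ≤ 2 * α * Mf ^ 2 := by positivity
          have c3 : (0:ℝ) ≤ 2 * D * Mf := by positivity
          have m1 := mul_le_mul_of_nonneg_left htel c1
          have m2 := mul_le_mul_of_nonneg_left hSe2 c2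
          have m3 := mul_le_mul_of_nonneg_left hSe c3
          linarith
  -- final constant bookkeeping
  have f1 : (0:ℝ) ≤ D ^ 2 / α := by positivity
  have f2 : (0:ℝ) ≤ 12 * α * Mf ^ 2 * B ^ 2 := by positivity
  have f3 : (0:ℝ) ≤ 12 * α * Mf ^ 2 := by positivity
  have f4 : (0:ℝ) ≤ 4 * D * Mf * B := by positivity
  have f5 : (0:ℝ) ≤ 4 * D * Mf := by positivity
  have f6 : (0:ℝ) ≤ 2 * D / α := by positivity
  have hC1 : 2 * D / α ≤ C := by rw [hCdef]; linarith
  have hC2 : 4 * D * Mf ≤ C := by rw [hCdef]; linarith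
  have hC3 : 12 * α * Mf ^ 2 ≤ C := by rw [hCdef]; linarith
  have hC4 : D ^ 2 / α + 12 * α * Mf ^ 2 * B ^ 2 + 4 * D * Mf * B ≤ C := by
    rw [hCdef]; linarith
  have hexp : (1 / α) * (D ^ 2 + 2 * D * P) + 2 * α * Mf ^ 2 * (2 * (3 * B ^ 2 + 3 * Y2))
      + 2 * D * Mf * (2 * (B + Y1))
      = D ^ 2 / α + (2 * D / α) * P + 12 * α * Mf ^ 2 * B ^ 2 + (12 * α * Mf ^ 2) * Y2
        + 4 * D * Mf * B + (4 * D * Mf) * Y1 := by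
    field_simp
    ring
  rw [hexp] at hsum
  have hm1 : (2 * D / α) * P ≤ C * P := mul_le_mul_of_nonneg_right hC1 hP0
  have hm2 : (4 * D * Mf) * Y1 ≤ C * Y1 := mul_le_mul_of_nonneg_right hC2 hY10
  have hm3 : (12 * α * Mf ^ 2) * Y2 ≤ C * Y2 := mul_le_mul_of_nonneg_right hC3 hY20
  calc ∑ t ∈ Finset.Icc 1 T, (φ t (x t) - φ t (xstar t))
      ≤ D ^ 2 / α + (2 * D / α) * P + 12 * α * Mf ^ 2 * B ^ 2 + (12 * α * Mf ^ 2) * Y2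
        + 4 * D * Mf * B + (4 * D * Mf) * Y1 := hsum
    _ ≤ C * 1 + C * P + C * Y1 + C * Y2 := by linarith [hm1, hm2, hm3, hC4]
    _ = C * (1 + P + Y1 + Y2) := by ring
end

section
/- Fix positive constants ℓ_0, L_y, M_f, D, E_0. Then there exists a constant C > 0, depending only on (ℓ_0, L_y, M_f, D, E_0) and not on T, with the following property. Let X ⊆ ℝ^{d1} be nonempty, closed and convex with diameter at most D, let T ≥ 1, and for each t ∈ {1,…,T}: let φ_t : ℝ^{d1} → ℝ be convex and differentiable with ‖∇φ_t(x)‖ ≤ ℓ_0 for all x ∈ X, and let y*_t : ℝ^{d1} → ℝ^{d2} be L_y-Lipschitz; let x* ∈ argmin_{x ∈ X} Σ_{t=1}^T φ_t(x). Suppose x_1 ∈ X, ‖y_1 − y*_1(x_1)‖ ≤ E_0, and for every t ∈ {1,…,T}: ‖y_{t+1} − y*_t(x_t)‖ ≤ ρ_t·‖y_t − y*_t(x_t)‖ with ρ_t := 1/(2t²), and x_{t+1} = Π_X(x_t − α_t·g̃_t) with stepsize α_t := D/(ℓ_0·√t) and some g̃_t ∈ ℝ^{d1} with ‖g̃_t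 − ∇φ_t(x_t)‖ ≤ M_f·‖y_{t+1} − y*_t(x_t)‖. Then Σ_{t=1}^T φ_t(x_t) − Σ_{t=1}^T φ_t(x*) ≤ C·( 1 + √T + Ȳ_{1,T} + Ȳ_{2,T} ), where Ȳ_{p,T} := Σ_{t=2}^T ‖y*_{t-1}(x*) − y*_t(x*)‖^p for p ∈ {1, 2}. -/
open Finset

section AuxLemmas

lemma aux_convex_grad_ineq {F : Type*} [NormedAddCommGroup F] [InnerProductSpace ℝ F]
    [CompleteSpace F] {φ : F → ℝ} (hc : ConvexOn ℝ Set.univ φ) (hd : Differentiable ℝ φ)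
    (x z : F) : φ x + inner ℝ (gradient φ x) (z - x) ≤ φ z := by
  set ψ : ℝ → ℝ := fun s => φ (x + s • (z - x)) with hψdef
  have hline : ∀ s : ℝ, HasDerivAt (fun s : ℝ => x + s • (z - x)) (z - x) s := fun s => by
    simpa using ((hasDerivAt_id s).smul_const (z - x)).const_add x
  have hgrad : HasGradientAt φ (gradient φ x) x := (hd x).hasGradientAt
  have hF : HasFDerivAt φ (InnerProductSpace.toDual ℝ F (gradient φ x)) x := hgrad.hasFDerivAt
  have hψ0 : HasDerivAt ψ (inner ℝ (gradient φ x) (z - x)) 0 := by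
    have h0 : x + (0:ℝ) • (z - x) = x := by simp
    have hcomp := HasFDerivAt.comp_hasDerivAt (0:ℝ) (h0 ▸ hF) (hline 0)
    rw [InnerProductSpace.toDual_apply_apply, h0] at hcomp
    exact hcomp
  have hconv : ConvexOn ℝ Set.univ ψ := by
    have hA := hc.comp_affineMap (AffineMap.lineMap x z : ℝ →ᵃ[ℝ] F)
    have h2 : (Set.univ : Set ℝ) = (AffineMap.lineMap x z : ℝ →ᵃ[ℝ] F) ⁻¹' Set.univ := by simp
    have heq : ψ = φ ∘ (AffineMap.lineMap x z : ℝ →ᵃ[ℝ] F) := by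
      funext s
      simp [hψdef, AffineMap.lineMap_apply, add_comm]
    rw [heq, h2]
    exact hA
  have hslope := hconv.le_slope_of_hasDerivAt (Set.mem_univ (0:ℝ)) (Set.mem_univ (1:ℝ))
    one_pos hψ0
  have hs : slope ψ 0 1 = ψ 1 - ψ 0 := by simp [slope_def_field]
  have hψ1 : ψ 1 = φ z := by simp [hψdef]
  have hψz : ψ 0 = φ x := by simp [hψdef]
  rw [hs, hψ1, hψz] at hslope
  linarith

lemma aux_proj_nonexpansive {F : Type*} [NormedAddCommGroup F] [InnerProductSpace ℝ F]
    {K : Set F} (hK : Convex ℝ K) {p q z : F} (hq : q ∈ K) (hz : z ∈ K)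
    (hmin : ∀ w ∈ K, ‖q - p‖ ≤ ‖w - p‖) : ‖q - z‖ ≤ ‖p - z‖ := by
  haveI : Nonempty K := ⟨⟨q, hq⟩⟩
  have hinf : ‖p - q‖ = ⨅ w : K, ‖p - w‖ := by
    apply le_antisymm
    · refine le_ciInf fun w => ?_
      rw [norm_sub_rev, norm_sub_rev p]
      exact hmin w w.2
    · exact ciInf_le ⟨0, fun _ ⟨_, h⟩ => h ▸ norm_nonneg _⟩ (⟨q, hq⟩ : K)
  have hobtuse : inner ℝ (p - q) (z - q) ≤ (0:ℝ) :=
    ((norm_eq_iInf_iff_real_inner_le_zero hK hq).mp hinf) z hz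
  have hexp : ‖p - z‖ ^ 2 = ‖p - q‖ ^ 2 + 2 * inner ℝ (p - q) (q - z) + ‖q - z‖ ^ 2 := by
    have h : p - z = (p - q) + (q - z) := by abel
    rw [h, norm_add_sq_real]
  have h2 : (0:ℝ) ≤ inner ℝ (p - q) (q - z) := by
    have h : inner ℝ (p - q) (q - z) = -(inner ℝ (p - q) (z - q) : ℝ) := by
      rw [← inner_neg_right]; congr 1; abel
    linarith [h ▸ neg_nonneg.mpr hobtuse]
  have hsq : ‖q - z‖ ^ 2 ≤ ‖p - z‖ ^ 2 := by nlinarith [sq_nonneg ‖p - q‖]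
  have h := Real.sqrt_le_sqrt hsq
  rwa [Real.sqrt_sq (norm_nonneg _), Real.sqrt_sq (norm_nonneg _)] at h

lemma aux_sum_inv_sqrt (T : ℕ) : ∑ t ∈ Icc 1 T, 1 / Real.sqrt t ≤ 2 * Real.sqrt T := by
  induction T with
  | zero => simp
  | succ n ih =>
    rw [Finset.sum_Icc_succ_top (by omega)]
    have hr : Real.sqrt ((n:ℝ)+1) > 0 := Real.sqrt_pos.mpr (by positivity)
    have hs : Real.sqrt (n:ℝ) ≥ 0 := Real.sqrt_nonneg _
    have hr2 : (Real.sqrt ((n:ℝ)+1))^2 = (n:ℝ)+1 := Real.sq_sqrt (by positivity)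
    have hs2 : (Real.sqrt (n:ℝ))^2 = (n:ℝ) := Real.sq_sqrt (by positivity)
    have key : 1 / Real.sqrt ((n:ℝ)+1) ≤ 2 * Real.sqrt ((n:ℝ)+1) - 2 * Real.sqrt (n:ℝ) := by
      rw [div_le_iff₀ hr]
      nlinarith [sq_nonneg (Real.sqrt ((n:ℝ)+1) - Real.sqrt (n:ℝ)),
        sq_nonneg (2 * Real.sqrt ((n:ℝ)+1) * Real.sqrt (n:ℝ) - (2*(n:ℝ)+1))]
    push_cast
    push_cast at ih key
    linarith

lemma aux_sum_inv_sq (T : ℕ) (hT : 1 ≤ T) :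
    ∑ t ∈ Icc 2 T, 1 / (t:ℝ)^2 ≤ 1 - 1/(T:ℝ) := by
  induction T, hT using Nat.le_induction with
  | base => simp
  | succ n hn ih =>
    rw [Finset.sum_Icc_succ_top (by omega)]
    have hn1 : (1:ℝ) ≤ (n:ℝ) := by exact_mod_cast hn
    have heq : 1/(n:ℝ) - 1/((n:ℝ)+1) = 1/((n:ℝ)*((n:ℝ)+1)) := by
      rw [div_sub_div _ _ (by linarith) (by linarith)]
      ring_nf
    have key : 1/((n:ℝ)+1)^2 ≤ 1/(n:ℝ) - 1/((n:ℝ)+1) := by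
      rw [heq]
      apply one_div_le_one_div_of_le (by positivity)
      nlinarith
    push_cast
    push_cast at ih key
    linarith

lemma aux_telescope (a c : ℕ → ℝ) (B : ℝ) (n : ℕ) (hn : 1 ≤ n)
    (ha0 : ∀ t, 0 ≤ a t) (haB : ∀ t, 1 ≤ t → t ≤ n + 1 → a t ≤ B)
    (hc0 : ∀ t, 0 ≤ c t) (hcm : ∀ t, c t ≤ c (t + 1)) :
    ∑ t ∈ Icc 1 n, (a t - a (t + 1)) * c t + a (n + 1) * c n ≤ B * c n := by
  induction n, hn using Nat.le_induction with
  | base =>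
    simp only [Finset.Icc_self, Finset.sum_singleton]
    have := haB 1 le_rfl (by omega)
    nlinarith [ha0 2, hc0 1]
  | succ n hn ih =>
    rw [Finset.sum_Icc_succ_top (by omega)]
    have h1 := ih (fun t h1 h2 => haB t h1 (by omega))
    have h2 := haB (n+1) (by omega) (by omega)
    have h3 := hcm n
    have h4 := ha0 (n+1)
    nlinarith [mul_le_mul_of_nonneg_right h2 (sub_nonneg.mpr h3)]

lemma aux_sum_shift (f : ℕ → ℝ) (T : ℕ) :
    ∑ t ∈ Icc 2 T, f (t - 1) = ∑ t ∈ Icc 1 (T - 1), f t := by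
  apply Finset.sum_nbij' (fun t => t - 1) (fun t => t + 1) <;>
    intros a ha <;> simp only [Finset.mem_Icc] at * <;> omega

lemma aux_icc_split (T : ℕ) (hT : 1 ≤ T) : Icc 1 T = insert 1 (Icc 2 T) := by
  ext i; simp only [Finset.mem_Icc, Finset.mem_insert]; omega

end AuxLemmas

set_option maxHeartbeats 2000000 in
/-- Static regret bound for the online alternating (projected) gradient method with
convex outer losses, stepsizes `α_t = D/(ℓ0·√t)` and inner contraction factors
`ρ_t = 1/(2t²)`: `BS-Regret_T = O(1 + √T + Ȳ_{1,T} + Ȳ_{2,T})`. -/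
theorem convex_static_regret
    (ℓ0 Ly Mf D E0 : ℝ)
    (hℓ0 : 0 < ℓ0) (hLy : 0 < Ly) (hMf : 0 < Mf) (hD : 0 < D) (hE0 : 0 < E0) :
    ∃ C > 0, ∀ (d1 d2 T : ℕ), 1 ≤ T →
      ∀ (X : Set (EuclideanSpace ℝ (Fin d1))), X.Nonempty → IsClosed X → Convex ℝ X →
      (∀ a ∈ X, ∀ b ∈ X, ‖a - b‖ ≤ D) →
      ∀ (φ : ℕ → EuclideanSpace ℝ (Fin d1) → ℝ)
        (xstar : EuclideanSpace ℝ (Fin d1))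
        (x : ℕ → EuclideanSpace ℝ (Fin d1))
        (ystar : ℕ → EuclideanSpace ℝ (Fin d1) → EuclideanSpace ℝ (Fin d2))
        (y : ℕ → EuclideanSpace ℝ (Fin d2))
        (g : ℕ → EuclideanSpace ℝ (Fin d1)),
      -- φ_t convex and differentiable
      (∀ t ∈ Finset.Icc 1 T, ConvexOn ℝ Set.univ (φ t)) →
      (∀ t ∈ Finset.Icc 1 T, Differentiable ℝ (φ t)) →
      -- bounded gradient on X
      (∀ t ∈ Finset.Icc 1 T, ∀ a ∈ X, ‖gradient (φ t) a‖ ≤ ℓ0) →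
      -- y*_t is Ly-Lipschitz
      (∀ t ∈ Finset.Icc 1 T, ∀ a b, ‖ystar t a - ystar t b‖ ≤ Ly * ‖a - b‖) →
      -- x* minimizes the cumulative loss over X
      (xstar ∈ X ∧ ∀ z ∈ X,
        ∑ t ∈ Finset.Icc 1 T, φ t xstar ≤ ∑ t ∈ Finset.Icc 1 T, φ t z) →
      x 1 ∈ X →
      ‖y 1 - ystar 1 (x 1)‖ ≤ E0 →
      -- inner contraction with ρ_t = 1/(2t²)
      (∀ t ∈ Finset.Icc 1 T, ‖y (t + 1) - ystar t (x t)‖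
        ≤ (1 / (2 * (t : ℝ) ^ 2)) * ‖y t - ystar t (x t)‖) →
      -- approximate hypergradient and projected update with stepsize α_t = D/(ℓ0·√t)
      (∀ t ∈ Finset.Icc 1 T,
        ‖g t - gradient (φ t) (x t)‖ ≤ Mf * ‖y (t + 1) - ystar t (x t)‖ ∧
        x (t + 1) ∈ X ∧
        ∀ z ∈ X, ‖x (t + 1) - (x t - (D / (ℓ0 * Real.sqrt t)) • g t)‖
          ≤ ‖z - (x t - (D / (ℓ0 * Real.sqrt t)) • g t)‖) →
      (∑ t ∈ Finset.Icc 1 T, φ t (x t)) - ∑ t ∈ Finset.Icc 1 T, φ t xstar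
        ≤ C * (1 + Real.sqrt T
            + (∑ t ∈ Finset.Icc 2 T, ‖ystar (t - 1) xstar - ystar t xstar‖)
            + ∑ t ∈ Finset.Icc 2 T, ‖ystar (t - 1) xstar - ystar t xstar‖ ^ 2) := by
  refine ⟨3*D*ℓ0 + (D*Mf^2/ℓ0)*(E0^2/2 + 6*Ly^2*D^2 + 2) + Mf*D*(E0 + 2*Ly*D + 2) + 1,
    by positivity, ?_⟩
  intro d1 d2 T hT X hXne hXcl hXconv hXdiam φ xstar x ystar y g hφconv hφdiff hφgrad hlip
    hxs hx1 hy1 hcontr hstep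
  -- abbreviations
  set u : ℕ → ℝ := fun t => ‖y (t+1) - ystar t (x t)‖ with hu
  set dl : ℕ → ℝ := fun t => ‖ystar (t-1) xstar - ystar t xstar‖ with hdl
  set a : ℕ → ℝ := fun t => ‖x t - xstar‖^2 with ha
  set c : ℕ → ℝ := fun t => ℓ0 * Real.sqrt t / (2*D) with hc
  have hu0 : ∀ t, 0 ≤ u t := fun t => norm_nonneg _
  have hdl0 : ∀ t, 0 ≤ dl t := fun t => norm_nonneg _
  -- membership of iterates
  have hX : ∀ t, 1 ≤ t → t ≤ T + 1 → x t ∈ X := by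
    intro t h1 h2
    match t, h1 with
    | 1, _ => exact hx1
    | (s+2), _ =>
      exact (hstep (s+1) (Finset.mem_Icc.mpr ⟨by omega, by omega⟩)).2.1
  have haB : ∀ t, 1 ≤ t → t ≤ T + 1 → a t ≤ D^2 := by
    intro t h1 h2
    have := hXdiam _ (hX t h1 h2) _ hxs.1
    simpa [ha] using pow_le_pow_left₀ (norm_nonneg _) this 2
  have ha0 : ∀ t, 0 ≤ a t := fun t => sq_nonneg _
  have hc0 : ∀ t, 0 ≤ c t := fun t => by
    simp only [hc]; positivity
  have hcm : ∀ t, c t ≤ c (t+1) := by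
    intro t
    simp only [hc]
    gcongr
    exact Nat.le_succ t
  -- Per-step regret inequality
  have hstep_ineq : ∀ t ∈ Icc 1 T, φ t (x t) - φ t xstar ≤
      (a t - a (t+1)) * c t + D*ℓ0 * (1/Real.sqrt t) + (D*Mf^2/ℓ0) * u t^2 + Mf*D * u t := by
    intro t ht
    rw [Finset.mem_Icc] at ht
    obtain ⟨ht1, ht2⟩ := ht
    have htmem : t ∈ Icc 1 T := Finset.mem_Icc.mpr ⟨ht1, ht2⟩
    obtain ⟨hg, hx', hproj⟩ := hstep t htmem
    have hxt : x t ∈ X := hX t ht1 (by omega)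
    have ht1R : (1:ℝ) ≤ (t:ℝ) := by exact_mod_cast ht1
    have hsq1 : 1 ≤ Real.sqrt t := by
      rw [show (1:ℝ) = Real.sqrt 1 from Real.sqrt_one.symm]
      exact Real.sqrt_le_sqrt ht1R
    have hsqpos : (0:ℝ) < Real.sqrt t := by linarith
    set α : ℝ := D / (ℓ0 * Real.sqrt t) with hαdef
    have hαpos : 0 < α := div_pos hD (by positivity)
    have hαc : α * c t = 1/2 := by
      simp only [hαdef, hc]
      field_simp
    -- projection step
    have hproj' : ‖x (t+1) - xstar‖ ≤ ‖(x t - α • g t) - xstar‖ :=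
      aux_proj_nonexpansive hXconv hx' hxs.1 hproj
    have hexp : ‖(x t - α • g t) - xstar‖^2
        = a t - 2 * α * inner ℝ (g t) (x t - xstar) + α^2 * ‖g t‖^2 := by
      have h : (x t - α • g t) - xstar = (x t - xstar) - α • g t := by abel
      rw [h, norm_sub_sq_real, real_inner_smul_right, norm_smul]
      simp only [ha, Real.norm_eq_abs, abs_of_pos hαpos]
      rw [real_inner_comm]
      ring
    have hkey : a (t+1) ≤ a t - 2*α*inner ℝ (g t) (x t - xstar) + α^2*‖g t‖^2 := by
      rw [← hexp]
      exact pow_le_pow_left₀ (norm_nonneg _) hproj' 2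
    have e1 : (2*α*inner ℝ (g t) (x t - xstar)) * c t = inner ℝ (g t) (x t - xstar) := by
      calc (2*α*inner ℝ (g t) (x t - xstar)) * c t
          = (α * c t) * (2*inner ℝ (g t) (x t - xstar)) := by ring
        _ = 1/2 * (2*inner ℝ (g t) (x t - xstar)) := by rw [hαc]
        _ = inner ℝ (g t) (x t - xstar) := by ring
    have e2 : α^2*‖g t‖^2 * c t = (α/2)*‖g t‖^2 := by
      calc α^2*‖g t‖^2 * c t = (α * c t) * (α*‖g t‖^2) := by ring
        _ = 1/2 * (α*‖g t‖^2) := by rw [hαc]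
        _ = (α/2)*‖g t‖^2 := by ring
    have hinner : (inner ℝ (g t) (x t - xstar) : ℝ)
        ≤ (a t - a (t+1)) * c t + (α/2)*‖g t‖^2 := by
      have P := mul_le_mul_of_nonneg_right
        (show 2*α*inner ℝ (g t) (x t - xstar) ≤ a t - a (t+1) + α^2*‖g t‖^2 by linarith)
        (hc0 t)
      rw [e1, add_mul, e2] at P
      exact P
    -- gradient norm bounds
    have hgd : ‖g t - gradient (φ t) (x t)‖ ≤ Mf * u t := hg
    have hgnorm : ‖g t‖ ≤ ℓ0 + Mf * u t := by
      have h1 : ‖g t‖ ≤ ‖g t - gradient (φ t) (x t)‖ + ‖gradient (φ t) (x t)‖ := by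
        simpa using norm_add_le (g t - gradient (φ t) (x t)) (gradient (φ t) (x t))
      have h2 := hφgrad t htmem _ hxt
      linarith
    have hG : ‖g t‖^2 ≤ 2*ℓ0^2 + 2*Mf^2 * u t^2 := by
      nlinarith [sq_nonneg (ℓ0 - Mf * u t), mul_self_le_mul_self (norm_nonneg (g t)) hgnorm, hu0 t]
    have hαhalf : (α/2)*‖g t‖^2 ≤ D*ℓ0*(1/Real.sqrt t) + (D*Mf^2/ℓ0) * u t^2 := by
      have hα1 : α * ℓ0^2 = D*ℓ0*(1/Real.sqrt t) := by
        rw [hαdef]; field_simp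
      have hα2 : α ≤ D/ℓ0 := by
        rw [hαdef, div_le_div_iff₀ (by positivity) hℓ0]
        nlinarith [mul_le_mul_of_nonneg_left hsq1 (le_of_lt (mul_pos hD hℓ0))]
      calc (α/2)*‖g t‖^2 ≤ (α/2)*(2*ℓ0^2 + 2*Mf^2*u t^2) :=
            mul_le_mul_of_nonneg_left hG (by positivity)
        _ = α*ℓ0^2 + α*(Mf^2*u t^2) := by ring
        _ ≤ D*ℓ0*(1/Real.sqrt t) + (D/ℓ0)*(Mf^2*u t^2) := by
            rw [hα1]
            gcongr
        _ = D*ℓ0*(1/Real.sqrt t) + (D*Mf^2/ℓ0) * u t^2 := by ring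
    -- convexity
    have hconv1 := aux_convex_grad_ineq (hφconv t htmem) (hφdiff t htmem) (x t) xstar
    have hflip : (inner ℝ (gradient (φ t) (x t)) (xstar - x t) : ℝ)
        = -(inner ℝ (gradient (φ t) (x t)) (x t - xstar) : ℝ) := by
      rw [← inner_neg_right]; congr 1; abel
    have hcv : φ t (x t) - φ t xstar
        ≤ inner ℝ (gradient (φ t) (x t)) (x t - xstar) := by
      rw [hflip] at hconv1; linarith
    have hsplitI : (inner ℝ (gradient (φ t) (x t)) (x t - xstar) : ℝ)
        = inner ℝ (g t) (x t - xstar) + inner ℝ (gradient (φ t) (x t) - g t) (x t - xstar) := by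
      rw [← inner_add_left]; congr 1; abel
    have herr : (inner ℝ (gradient (φ t) (x t) - g t) (x t - xstar) : ℝ) ≤ Mf * u t * D := by
      calc (inner ℝ (gradient (φ t) (x t) - g t) (x t - xstar) : ℝ)
          ≤ ‖gradient (φ t) (x t) - g t‖ * ‖x t - xstar‖ := real_inner_le_norm _ _
        _ ≤ (Mf * u t) * D := by
            apply mul_le_mul _ (hXdiam _ hxt _ hxs.1) (norm_nonneg _) (by positivity)
            rw [norm_sub_rev]; exact hgd
    rw [hsplitI] at hcv
    linarith
  -- bound on u 1
  have hu1 : u 1 ≤ E0/2 := by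
    have h : u 1 ≤ 1/(2*((1:ℕ):ℝ)^2) * ‖y 1 - ystar 1 (x 1)‖ :=
      hcontr 1 (Finset.mem_Icc.mpr ⟨le_rfl, hT⟩)
    norm_num at h
    linarith
  -- recursion for u on [2, T]
  have hrec : ∀ t ∈ Icc 2 T,
      u t ≤ 1/2 * u (t-1) + Ly*D * (1/(t:ℝ)^2) + dl t ∧
      u t^2 ≤ 1/2 * u (t-1)^2 + 3*Ly^2*D^2 * (1/(t:ℝ)^2) + dl t^2 := by
    intro t ht
    rw [Finset.mem_Icc] at ht
    obtain ⟨s, rfl⟩ : ∃ s, t = s + 1 := ⟨t-1, by omega⟩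
    have hs1 : 1 ≤ s := by omega
    have hsT : s + 1 ≤ T := ht.2
    have hsmem : s ∈ Icc 1 T := Finset.mem_Icc.mpr ⟨hs1, by omega⟩
    have hs1mem : s+1 ∈ Icc 1 T := Finset.mem_Icc.mpr ⟨by omega, hsT⟩
    have hxsX : x s ∈ X := hX s hs1 (by omega)
    have hxs1X : x (s+1) ∈ X := hX (s+1) (by omega) (by omega)
    have hgoalrw : s + 1 - 1 = s := by omega
    rw [hgoalrw]
    -- triangle inequality
    have htri : ‖y (s+1) - ystar (s+1) (x (s+1))‖ ≤ u s + 2*(Ly*D) + dl (s+1) := by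
      have hdecomp : y (s+1) - ystar (s+1) (x (s+1))
          = (y (s+1) - ystar s (x s)) + ((ystar s (x s) - ystar s xstar)
            + ((ystar s xstar - ystar (s+1) xstar)
              + (ystar (s+1) xstar - ystar (s+1) (x (s+1))))) := by abel
      have t1 : ‖y (s+1) - ystar s (x s)‖ = u s := rfl
      have t2 : ‖ystar s (x s) - ystar s xstar‖ ≤ Ly * D :=
        (hlip s hsmem _ _).trans (mul_le_mul_of_nonneg_left (hXdiam _ hxsX _ hxs.1) hLy.le)
      have t4 : ‖ystar (s+1) xstar - ystar (s+1) (x (s+1))‖ ≤ Ly * D :=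
        (hlip (s+1) hs1mem _ _).trans
          (mul_le_mul_of_nonneg_left (hXdiam _ hxs.1 _ hxs1X) hLy.le)
      have t3 : ‖ystar s xstar - ystar (s+1) xstar‖ = dl (s+1) := by
        simp only [hdl, hgoalrw]
      have n1 := norm_add_le (ystar s xstar - ystar (s+1) xstar)
        (ystar (s+1) xstar - ystar (s+1) (x (s+1)))
      have n2 := norm_add_le (ystar s (x s) - ystar s xstar)
        ((ystar s xstar - ystar (s+1) xstar)
          + (ystar (s+1) xstar - ystar (s+1) (x (s+1))))
      have n3 := norm_add_le (y (s+1) - ystar s (x s))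
        ((ystar s (x s) - ystar s xstar) + ((ystar s xstar - ystar (s+1) xstar)
          + (ystar (s+1) xstar - ystar (s+1) (x (s+1)))))
      rw [hdecomp]
      rw [t1] at n3
      rw [t3] at n1
      linarith
    -- contraction
    set m : ℝ := ((s+1:ℕ):ℝ) with hmdef
    have hm2 : (2:ℝ) ≤ m := by
      rw [hmdef]; push_cast
      have : (1:ℝ) ≤ (s:ℝ) := by exact_mod_cast hs1
      linarith
    have hmpos : (0:ℝ) < m := by linarith
    set r : ℝ := 1/(2*m^2) with hrdef
    have hrpos : 0 < r := by positivity
    have hrle : r ≤ 1/8 := by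
      rw [hrdef]
      apply one_div_le_one_div_of_le (by norm_num)
      nlinarith
    have hcon : u (s+1) ≤ r * ‖y (s+1) - ystar (s+1) (x (s+1))‖ := hcontr (s+1) hs1mem
    have hr : u (s+1) ≤ r * (u s + 2*(Ly*D) + dl (s+1)) :=
      hcon.trans (mul_le_mul_of_nonneg_left htri hrpos.le)
    have hA := hu0 s
    have hdl' := hdl0 (s+1)
    have hLD : 0 < Ly*D := mul_pos hLy hD
    constructor
    · -- linear recursion
      have hterm : r * (2*(Ly*D)) = Ly*D * (1/m^2) := by
        rw [hrdef]; field_simp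
      have b1 : r * u s ≤ 1/2 * u s := by nlinarith
      have b2 : r * dl (s+1) ≤ dl (s+1) := by nlinarith
      have e : r*(u s + 2*(Ly*D) + dl (s+1))
          = r*u s + Ly*D*(1/m^2) + r*dl (s+1) := by rw [← hterm]; ring
      rw [e] at hr
      linarith
    · -- squared recursion
      have husq : u (s+1)^2 ≤ (r * (u s + 2*(Ly*D) + dl (s+1)))^2 :=
        pow_le_pow_left₀ (hu0 _) hr 2
      have hS : (u s + 2*(Ly*D) + dl (s+1))^2
          ≤ 3*(u s)^2 + 12*(Ly*D)^2 + 3*(dl (s+1))^2 := by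
        nlinarith [sq_nonneg (u s - 2*(Ly*D)), sq_nonneg (u s - dl (s+1)),
          sq_nonneg (2*(Ly*D) - dl (s+1))]
      have h3r : 3*r^2 ≤ 1/2 := by nlinarith
      have h12 : 12 * r^2 * (Ly*D)^2 ≤ 3*Ly^2*D^2 * (1/m^2) := by
        have hrm : r * m^2 = 1/2 := by rw [hrdef]; field_simp
        rw [← mul_le_mul_iff_of_pos_right (by positivity : (0:ℝ) < m^2)]
        have e2 : 3*Ly^2*D^2*(1/m^2) * m^2 = 3*Ly^2*D^2 := by field_simp
        rw [e2]
        have e3 : 12*r^2*(Ly*D)^2 * m^2 = 6*r*(Ly*D)^2 := by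
          have e4 : 12*r^2*(Ly*D)^2*m^2 = 12*(r*m^2)*(r*(Ly*D)^2) := by ring
          rw [e4, hrm]; ring
        rw [e3]
        nlinarith [mul_le_mul_of_nonneg_right hrle (sq_nonneg (Ly*D))]
      have hfin : u (s+1)^2 ≤ 3*r^2*(u s)^2 + 12*r^2*(Ly*D)^2 + 3*r^2*(dl (s+1))^2 := by
        nlinarith [mul_le_mul_of_nonneg_left hS (by positivity : (0:ℝ) ≤ r^2)]
      have b1 : 3*r^2*(u s)^2 ≤ 1/2*(u s)^2 :=
        by nlinarith [sq_nonneg (u s)]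
      have b3 : 3*r^2*(dl (s+1))^2 ≤ (dl (s+1))^2 := by nlinarith [sq_nonneg (dl (s+1))]
      linarith
  -- summed bounds
  have hinvsq : ∑ t ∈ Icc 2 T, (1:ℝ)/(t:ℝ)^2 ≤ 1 := by
    have h := aux_sum_inv_sq T hT
    have h2 : (0:ℝ) ≤ 1/(T:ℝ) := by positivity
    linarith
  have hshiftu : ∑ t ∈ Icc 2 T, u (t-1) ≤ ∑ t ∈ Icc 1 T, u t := by
    rw [aux_sum_shift]
    exact Finset.sum_le_sum_of_subset_of_nonneg
      (Finset.Icc_subset_Icc le_rfl (by omega)) (fun i _ _ => hu0 i)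
  have hshiftu2 : ∑ t ∈ Icc 2 T, u (t-1)^2 ≤ ∑ t ∈ Icc 1 T, u t^2 := by
    rw [aux_sum_shift (fun t => u t^2)]
    exact Finset.sum_le_sum_of_subset_of_nonneg
      (Finset.Icc_subset_Icc le_rfl (by omega)) (fun i _ _ => sq_nonneg _)
  have hB1 : ∑ t ∈ Icc 1 T, u t ≤ E0 + 2*(Ly*D) + 2*∑ t ∈ Icc 2 T, dl t := by
    have hsplit : ∑ t ∈ Icc 1 T, u t = u 1 + ∑ t ∈ Icc 2 T, u t := by
      rw [aux_icc_split T hT, Finset.sum_insert (by simp)]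
    have hsum2 : ∑ t ∈ Icc 2 T, u t
        ≤ ∑ t ∈ Icc 2 T, (1/2 * u (t-1) + Ly*D * (1/(t:ℝ)^2) + dl t) :=
      Finset.sum_le_sum (fun t ht => (hrec t ht).1)
    have hexp : ∑ t ∈ Icc 2 T, (1/2 * u (t-1) + Ly*D * (1/(t:ℝ)^2) + dl t)
        = 1/2 * ∑ t ∈ Icc 2 T, u (t-1) + Ly*D * ∑ t ∈ Icc 2 T, (1:ℝ)/(t:ℝ)^2
          + ∑ t ∈ Icc 2 T, dl t := by
      rw [Finset.sum_add_distrib, Finset.sum_add_distrib, ← Finset.mul_sum, ← Finset.mul_sum]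
    rw [hexp] at hsum2
    have hmul := mul_le_mul_of_nonneg_left hinvsq (mul_pos hLy hD).le
    linarith
  have hB2 : ∑ t ∈ Icc 1 T, u t^2
      ≤ E0^2/2 + 6*(Ly^2*D^2) + 2*∑ t ∈ Icc 2 T, dl t^2 := by
    have hsplit : ∑ t ∈ Icc 1 T, u t^2 = u 1^2 + ∑ t ∈ Icc 2 T, u t^2 := by
      rw [aux_icc_split T hT, Finset.sum_insert (by simp)]
    have hsum2 : ∑ t ∈ Icc 2 T, u t^2
        ≤ ∑ t ∈ Icc 2 T, (1/2 * u (t-1)^2 + 3*Ly^2*D^2 * (1/(t:ℝ)^2) + dl t^2) :=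
      Finset.sum_le_sum (fun t ht => (hrec t ht).2)
    have hexp : ∑ t ∈ Icc 2 T, (1/2 * u (t-1)^2 + 3*Ly^2*D^2 * (1/(t:ℝ)^2) + dl t^2)
        = 1/2 * ∑ t ∈ Icc 2 T, u (t-1)^2 + 3*Ly^2*D^2 * ∑ t ∈ Icc 2 T, (1:ℝ)/(t:ℝ)^2
          + ∑ t ∈ Icc 2 T, dl t^2 := by
      rw [Finset.sum_add_distrib, Finset.sum_add_distrib, ← Finset.mul_sum, ← Finset.mul_sum]
    rw [hexp] at hsum2
    have hmul := mul_le_mul_of_nonneg_left hinvsq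
      (by positivity : (0:ℝ) ≤ 3*Ly^2*D^2)
    have hu1sq : u 1^2 ≤ E0^2/4 := by nlinarith [hu0 1]
    linarith
  -- telescoping
  have htel : ∑ t ∈ Icc 1 T, (a t - a (t+1))*c t ≤ D*ℓ0*Real.sqrt T/2 := by
    have h := aux_telescope a c (D^2) T hT ha0 haB hc0 hcm
    have h2 : 0 ≤ a (T+1) * c T := mul_nonneg (ha0 _) (hc0 _)
    have h3 : D^2 * c T = D*ℓ0*Real.sqrt T/2 := by
      simp only [hc]; field_simp
    linarith
  have hsqrtsum : ∑ t ∈ Icc 1 T, 1/Real.sqrt (t:ℕ) ≤ 2*Real.sqrt T := aux_sum_inv_sqrt T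
  -- put everything together
  have hsum_main : ∑ t ∈ Icc 1 T, (φ t (x t) - φ t xstar)
      ≤ ∑ t ∈ Icc 1 T, ((a t - a (t+1))*c t)
        + D*ℓ0 * ∑ t ∈ Icc 1 T, (1/Real.sqrt (t:ℕ))
        + (D*Mf^2/ℓ0) * ∑ t ∈ Icc 1 T, u t^2
        + Mf*D * ∑ t ∈ Icc 1 T, u t := by
    have h := Finset.sum_le_sum hstep_ineq
    calc ∑ t ∈ Icc 1 T, (φ t (x t) - φ t xstar)
        ≤ ∑ t ∈ Icc 1 T, ((a t - a (t+1)) * c t + D*ℓ0 * (1/Real.sqrt t)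
            + (D*Mf^2/ℓ0) * u t^2 + Mf*D * u t) := h
      _ = ∑ t ∈ Icc 1 T, ((a t - a (t+1))*c t)
          + D*ℓ0 * ∑ t ∈ Icc 1 T, (1/Real.sqrt (t:ℕ))
          + (D*Mf^2/ℓ0) * ∑ t ∈ Icc 1 T, u t^2
          + Mf*D * ∑ t ∈ Icc 1 T, u t := by
        rw [Finset.sum_add_distrib, Finset.sum_add_distrib, Finset.sum_add_distrib,
          ← Finset.mul_sum, ← Finset.mul_sum, ← Finset.mul_sum]
  have htotal : (∑ t ∈ Icc 1 T, φ t (x t)) - ∑ t ∈ Icc 1 T, φ t xstar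
      = ∑ t ∈ Icc 1 T, (φ t (x t) - φ t xstar) := (Finset.sum_sub_distrib ..).symm
  -- final assembly
  have hY1nn : 0 ≤ ∑ t ∈ Icc 2 T, dl t := Finset.sum_nonneg fun i _ => hdl0 i
  have hY2nn : 0 ≤ ∑ t ∈ Icc 2 T, dl t^2 := Finset.sum_nonneg fun i _ => sq_nonneg _
  have hsTnn : 0 ≤ Real.sqrt T := Real.sqrt_nonneg _
  have hp1 : 0 < (D*Mf^2/ℓ0)*(E0^2/2 + 6*Ly^2*D^2 + 2) := by positivity
  have hp2 : 0 < Mf*D*(E0 + 2*Ly*D + 2) := by positivity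
  have hp3 : 0 < D*ℓ0 := mul_pos hD hℓ0
  have hp4 : 0 ≤ Mf*D*(E0 + 2*Ly*D) := by positivity
  have hp5 : 0 ≤ (D*Mf^2/ℓ0)*(E0^2/2 + 6*Ly^2*D^2) := by positivity
  have hp6 : 0 < D*Mf^2/ℓ0 := by positivity
  have hp7 : 0 < Mf*D := mul_pos hMf hD
  show (∑ t ∈ Finset.Icc 1 T, φ t (x t)) - ∑ t ∈ Finset.Icc 1 T, φ t xstar
      ≤ (3*D*ℓ0 + (D*Mf^2/ℓ0)*(E0^2/2 + 6*Ly^2*D^2 + 2) + Mf*D*(E0 + 2*Ly*D + 2) + 1)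
        * (1 + Real.sqrt T + (∑ t ∈ Finset.Icc 2 T, dl t) + ∑ t ∈ Finset.Icc 2 T, dl t ^ 2)
  set C : ℝ := 3*D*ℓ0 + (D*Mf^2/ℓ0)*(E0^2/2 + 6*Ly^2*D^2 + 2) + Mf*D*(E0 + 2*Ly*D + 2) + 1
    with hCdef
  set Y1 : ℝ := ∑ t ∈ Icc 2 T, dl t with hY1def
  set Y2 : ℝ := ∑ t ∈ Icc 2 T, dl t^2 with hY2def
  -- chain of bounds
  have hchain : (∑ t ∈ Finset.Icc 1 T, φ t (x t)) - ∑ t ∈ Finset.Icc 1 T, φ t xstar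
      ≤ D*ℓ0*Real.sqrt T/2 + D*ℓ0*(2*Real.sqrt T)
        + (D*Mf^2/ℓ0)*(E0^2/2 + 6*(Ly^2*D^2) + 2*Y2) + Mf*D*(E0 + 2*(Ly*D) + 2*Y1) := by
    rw [htotal]
    have m1 := mul_le_mul_of_nonneg_left hsqrtsum hp3.le
    have m2 := mul_le_mul_of_nonneg_left hB2 hp6.le
    have m3 := mul_le_mul_of_nonneg_left hB1 hp7.le
    linarith
  -- coefficient comparisons
  have c1 : D*ℓ0*Real.sqrt T/2 + D*ℓ0*(2*Real.sqrt T) ≤ C*Real.sqrt T := by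
    have : D*ℓ0*Real.sqrt T/2 + D*ℓ0*(2*Real.sqrt T) = (5/2*(D*ℓ0))*Real.sqrt T := by ring
    rw [this]
    apply mul_le_mul_of_nonneg_right _ hsTnn
    rw [hCdef]; linarith
  have c2 : Mf*D*(2*Y1) ≤ C*Y1 := by
    have h2 : 2*(Mf*D) ≤ C := by rw [hCdef]; nlinarith
    calc Mf*D*(2*Y1) = (2*(Mf*D))*Y1 := by ring
      _ ≤ C*Y1 := mul_le_mul_of_nonneg_right h2 hY1nn
  have c3 : (D*Mf^2/ℓ0)*(2*Y2) ≤ C*Y2 := by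
    have h2 : 2*(D*Mf^2/ℓ0) ≤ C := by rw [hCdef]; nlinarith
    calc (D*Mf^2/ℓ0)*(2*Y2) = (2*(D*Mf^2/ℓ0))*Y2 := by ring
      _ ≤ C*Y2 := mul_le_mul_of_nonneg_right h2 hY2nn
  have c4 : (D*Mf^2/ℓ0)*(E0^2/2 + 6*(Ly^2*D^2)) + Mf*D*(E0 + 2*(Ly*D)) ≤ C := by
    rw [hCdef]; nlinarith
  clear_value C Y1 Y2
  linarith [hchain, c1, c2, c3, c4]
end

section
/- Let α, ρ, M_f, L_y > 0, set c := 3·(1 + 2·L_y²·M_f²·α²), and assume c·ρ² < 1. Let T ≥ 1, and for each t ∈ {1,…,T} let y*_t : ℝ^{d1} → ℝ^{d2} be L_y-Lipschitz and let v_t ∈ ℝ^{d1}. Suppose the sequences x_1,…,x_{T+1} ∈ ℝ^{d1} and y_1,…,y_{T+1} ∈ ℝ^{d2} satisfy, for every t ∈ {1,…,T}: ‖y_{t+1} − y*_t(x_t)‖ ≤ ρ·‖y_t − y*_t(x_t)‖, and x_{t+1} = x_t − α·g̃_t for some g̃_t ∈ ℝ^{d1} with ‖g̃_t − v_t‖ ≤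 M_f·‖y_{t+1} − y*_t(x_t)‖. Assume H_T := Σ_{t=2}^T sup_{x ∈ ℝ^{d1}} ‖y*_{t-1}(x) − y*_t(x)‖² is finite. Then Σ_{t=1}^T ‖y_{t+1} − y*_t(x_t)‖² ≤ (1 + c·ρ²/(1 − c·ρ²))·ρ²·‖y_1 − y*_1(x_1)‖² + (6·L_y²·α²·ρ²/(1 − c·ρ²))·Σ_{t=1}^T ‖v_t‖² + (3·ρ²/(1 − c·ρ²))·H_T. -/
open Finset

/-- Inner-estimation-error lemma for the nonconvex online alternating gradient method:
the sum of squared inner errors is bounded in terms of `Σ‖v_t‖²` and the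
inner-minimizer-map variation `H_T = Σ_t sup_x ‖y*_{t-1}(x) − y*_t(x)‖²`. -/
theorem nonconvex_inner_error_bound
    (d1 d2 : ℕ) (α ρ Mf Ly c : ℝ)
    (hα : 0 < α) (hρ : 0 < ρ) (hMf : 0 < Mf) (hLy : 0 < Ly)
    (hcdef : c = 3 * (1 + 2 * Ly ^ 2 * Mf ^ 2 * α ^ 2))
    (hcρ : c * ρ ^ 2 < 1)
    (T : ℕ) (hT : 1 ≤ T)
    (ystar : ℕ → EuclideanSpace ℝ (Fin d1) → EuclideanSpace ℝ (Fin d2))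
    (hylip : ∀ t ∈ Finset.Icc 1 T, ∀ a b, ‖ystar t a - ystar t b‖ ≤ Ly * ‖a - b‖)
    (v : ℕ → EuclideanSpace ℝ (Fin d1))
    (x : ℕ → EuclideanSpace ℝ (Fin d1))
    (y : ℕ → EuclideanSpace ℝ (Fin d2))
    (g : ℕ → EuclideanSpace ℝ (Fin d1))
    (hcontract : ∀ t ∈ Finset.Icc 1 T,
      ‖y (t + 1) - ystar t (x t)‖ ≤ ρ * ‖y t - ystar t (x t)‖)
    (hupdate : ∀ t ∈ Finset.Icc 1 T,
      x (t + 1) = x t - α • g t ∧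
      ‖g t - v t‖ ≤ Mf * ‖y (t + 1) - ystar t (x t)‖)
    -- finiteness of H_T: each supremum is attained as a finite real supremum
    (hbdd : ∀ t ∈ Finset.Icc 2 T,
      BddAbove (Set.range fun a => ‖ystar (t - 1) a - ystar t a‖ ^ 2)) :
    ∑ t ∈ Finset.Icc 1 T, ‖y (t + 1) - ystar t (x t)‖ ^ 2
      ≤ (1 + c * ρ ^ 2 / (1 - c * ρ ^ 2)) * ρ ^ 2 * ‖y 1 - ystar 1 (x 1)‖ ^ 2
        + (6 * Ly ^ 2 * α ^ 2 * ρ ^ 2 / (1 - c * ρ ^ 2))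
            * ∑ t ∈ Finset.Icc 1 T, ‖v t‖ ^ 2
        + (3 * ρ ^ 2 / (1 - c * ρ ^ 2))
            * ∑ t ∈ Finset.Icc 2 T, ⨆ a, ‖ystar (t - 1) a - ystar t a‖ ^ 2 := by
  have hc : 0 < c := by rw [hcdef]; positivity
  have h1 : 0 < 1 - c * ρ ^ 2 := by linarith
  set D := ‖y 1 - ystar 1 (x 1)‖ ^ 2 with hD
  set S := ∑ t ∈ Finset.Icc 1 T, ‖y (t + 1) - ystar t (x t)‖ ^ 2 with hS
  set V := ∑ t ∈ Finset.Icc 1 T, ‖v t‖ ^ 2 with hV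
  set H := ∑ t ∈ Finset.Icc 2 T, ⨆ a, ‖ystar (t - 1) a - ystar t a‖ ^ 2 with hH
  -- per-step inequality
  have step : ∀ t ∈ Finset.Icc 2 T,
      ‖y (t + 1) - ystar t (x t)‖ ^ 2
        ≤ c * ρ ^ 2 * ‖y t - ystar (t - 1) (x (t - 1))‖ ^ 2
          + 6 * Ly ^ 2 * α ^ 2 * ρ ^ 2 * ‖v (t - 1)‖ ^ 2
          + 3 * ρ ^ 2 * (⨆ a, ‖ystar (t - 1) a - ystar t a‖ ^ 2) := by
    intro t ht
    obtain ⟨ht2, htT⟩ := Finset.mem_Icc.mp ht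
    have htI : t ∈ Finset.Icc 1 T := Finset.mem_Icc.mpr ⟨by omega, htT⟩
    have ht1 : t - 1 ∈ Finset.Icc 1 T := Finset.mem_Icc.mpr ⟨by omega, by omega⟩
    have hsucc : t - 1 + 1 = t := by omega
    set e1 := ‖y t - ystar (t - 1) (x (t - 1))‖ with he1
    set e2 := ‖y (t + 1) - ystar t (x t)‖ with he2
    set b := ‖y t - ystar t (x t)‖ with hb
    set w := ‖ystar (t - 1) (x t) - ystar t (x t)‖ with hw
    obtain ⟨hxup, hgv⟩ := hupdate (t - 1) ht1
    rw [hsucc] at hxup hgv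
    -- ‖x (t-1) - x t‖ = α * ‖g (t-1)‖
    have hxdiff : ‖x (t - 1) - x t‖ = α * ‖g (t - 1)‖ := by
      rw [hxup]
      have : x (t - 1) - (x (t - 1) - α • g (t - 1)) = α • g (t - 1) := by abel
      rw [this, norm_smul, Real.norm_eq_abs, abs_of_pos hα]
    -- ‖g (t-1)‖ ≤ ‖v (t-1)‖ + Mf * e1
    have hgle : ‖g (t - 1)‖ ≤ ‖v (t - 1)‖ + Mf * e1 := by
      have h := norm_add_le (g (t - 1) - v (t - 1)) (v (t - 1))
      rw [sub_add_cancel] at h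
      have := hgv
      calc ‖g (t - 1)‖ ≤ ‖g (t - 1) - v (t - 1)‖ + ‖v (t - 1)‖ := h
        _ ≤ Mf * e1 + ‖v (t - 1)‖ := by exact add_le_add_left hgv _
        _ = ‖v (t - 1)‖ + Mf * e1 := by ring
    -- triangle inequality for b
    have htri : b ≤ e1 + Ly * (α * ‖g (t - 1)‖) + w := by
      have hdecomp : y t - ystar t (x t)
          = (y t - ystar (t - 1) (x (t - 1)))
            + ((ystar (t - 1) (x (t - 1)) - ystar (t - 1) (x t))
              + (ystar (t - 1) (x t) - ystar t (x t))) := by abel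
      have hlip := hylip (t - 1) ht1 (x (t - 1)) (x t)
      calc b = ‖(y t - ystar (t - 1) (x (t - 1)))
            + ((ystar (t - 1) (x (t - 1)) - ystar (t - 1) (x t))
              + (ystar (t - 1) (x t) - ystar t (x t)))‖ := by rw [hb, hdecomp]
        _ ≤ e1 + (‖ystar (t - 1) (x (t - 1)) - ystar (t - 1) (x t)‖ + w) := by
            refine (norm_add_le _ _).trans (add_le_add_right (norm_add_le _ _) _)
        _ ≤ e1 + (Ly * ‖x (t - 1) - x t‖ + w) := by
            exact add_le_add_right (add_le_add_left hlip _) _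
        _ = e1 + Ly * (α * ‖g (t - 1)‖) + w := by rw [hxdiff]; ring
    have hcon := hcontract t htI
    have he2nn : (0:ℝ) ≤ e2 := norm_nonneg _
    have he1nn : (0:ℝ) ≤ e1 := norm_nonneg _
    have hbnn : (0:ℝ) ≤ b := norm_nonneg _
    have hwnn : (0:ℝ) ≤ w := norm_nonneg _
    have hgnn : (0:ℝ) ≤ ‖g (t - 1)‖ := norm_nonneg _
    have hvnn : (0:ℝ) ≤ ‖v (t - 1)‖ := norm_nonneg _
    -- e2² ≤ ρ² b²
    have h2 : e2 ^ 2 ≤ ρ ^ 2 * b ^ 2 := by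
      calc e2 ^ 2 ≤ (ρ * b) ^ 2 := pow_le_pow_left₀ he2nn hcon 2
        _ = ρ ^ 2 * b ^ 2 := by ring
    -- g² bound
    have hg2 : ‖g (t - 1)‖ ^ 2 ≤ 2 * ‖v (t - 1)‖ ^ 2 + 2 * Mf ^ 2 * e1 ^ 2 := by
      have h := pow_le_pow_left₀ hgnn hgle 2
      have h2 := sq_nonneg (‖v (t - 1)‖ - Mf * e1)
      ring_nf at h h2 ⊢
      linarith
    -- b² bound
    have hb2 : b ^ 2 ≤ 3 * (e1 ^ 2 + Ly ^ 2 * α ^ 2 * ‖g (t - 1)‖ ^ 2 + w ^ 2) := by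
      have h := pow_le_pow_left₀ hbnn htri 2
      have q1 := sq_nonneg (e1 - Ly * (α * ‖g (t - 1)‖))
      have q2 := sq_nonneg (e1 - w)
      have q3 := sq_nonneg (Ly * (α * ‖g (t - 1)‖) - w)
      ring_nf at h q1 q2 q3 ⊢
      linarith
    -- w² ≤ sup
    have hwsup : w ^ 2 ≤ ⨆ a, ‖ystar (t - 1) a - ystar t a‖ ^ 2 :=
      le_ciSup (hbdd t ht) (x t)
    have hρ2 : (0:ℝ) ≤ ρ ^ 2 := sq_nonneg ρ
    have A := mul_le_mul_of_nonneg_left hb2 hρ2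
    have B := mul_le_mul_of_nonneg_left hg2
      (by positivity : (0:ℝ) ≤ 3 * ρ ^ 2 * (Ly ^ 2 * α ^ 2))
    have C := mul_le_mul_of_nonneg_left hwsup (by positivity : (0:ℝ) ≤ 3 * ρ ^ 2)
    rw [hcdef]
    ring_nf at A B C h2 ⊢
    linarith
  -- reindexing lemma
  have reidx : ∀ f : ℕ → ℝ, ∑ t ∈ Finset.Icc 2 T, f (t - 1) = ∑ t ∈ Finset.Icc 1 (T - 1), f t := by
    intro f
    rw [show Finset.Icc 2 T = (Finset.Icc 1 (T - 1)).map (addRightEmbedding 1) by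
      rw [Finset.map_add_right_Icc]; congr 1; omega]
    rw [Finset.sum_map]; simp [addRightEmbedding]
  -- sum the per-step inequality
  have sum2 : ∑ t ∈ Finset.Icc 2 T, ‖y (t + 1) - ystar t (x t)‖ ^ 2
      ≤ c * ρ ^ 2 * S + 6 * Ly ^ 2 * α ^ 2 * ρ ^ 2 * V + 3 * ρ ^ 2 * H := by
    have h := Finset.sum_le_sum step
    rw [Finset.sum_add_distrib, Finset.sum_add_distrib, ← Finset.mul_sum,
      ← Finset.mul_sum, ← Finset.mul_sum] at h
    have he : ∑ t ∈ Finset.Icc 2 T, ‖y t - ystar (t - 1) (x (t - 1))‖ ^ 2 ≤ S := by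
      have h1' : ∑ t ∈ Finset.Icc 2 T, ‖y t - ystar (t - 1) (x (t - 1))‖ ^ 2
          = ∑ t ∈ Finset.Icc 1 (T - 1), ‖y (t + 1) - ystar t (x t)‖ ^ 2 := by
        have := reidx (fun t => ‖y (t + 1) - ystar t (x t)‖ ^ 2)
        simpa using this.symm ▸ (by
          apply Finset.sum_congr rfl
          intro t ht
          obtain ⟨ht2, _⟩ := Finset.mem_Icc.mp ht
          have : t - 1 + 1 = t := by omega
          rw [this])
      rw [h1']
      exact Finset.sum_le_sum_of_subset_of_nonneg
        (Finset.Icc_subset_Icc_right (by omega)) (fun _ _ _ => sq_nonneg _)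
    have hv : ∑ t ∈ Finset.Icc 2 T, ‖v (t - 1)‖ ^ 2 ≤ V := by
      rw [reidx (fun t => ‖v t‖ ^ 2)]
      exact Finset.sum_le_sum_of_subset_of_nonneg
        (Finset.Icc_subset_Icc_right (by omega)) (fun _ _ _ => sq_nonneg _)
    have hcρ2 : (0:ℝ) ≤ c * ρ ^ 2 := by positivity
    have hA : (0:ℝ) ≤ 6 * Ly ^ 2 * α ^ 2 * ρ ^ 2 := by positivity
    calc ∑ t ∈ Finset.Icc 2 T, ‖y (t + 1) - ystar t (x t)‖ ^ 2
        ≤ c * ρ ^ 2 * (∑ t ∈ Finset.Icc 2 T, ‖y t - ystar (t - 1) (x (t - 1))‖ ^ 2)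
          + 6 * Ly ^ 2 * α ^ 2 * ρ ^ 2 * (∑ t ∈ Finset.Icc 2 T, ‖v (t - 1)‖ ^ 2)
          + 3 * ρ ^ 2 * H := h
      _ ≤ c * ρ ^ 2 * S + 6 * Ly ^ 2 * α ^ 2 * ρ ^ 2 * V + 3 * ρ ^ 2 * H := by
          have := mul_le_mul_of_nonneg_left he hcρ2
          have := mul_le_mul_of_nonneg_left hv hA
          linarith
  -- split off t = 1
  have hsplit : S = ‖y 2 - ystar 1 (x 1)‖ ^ 2
      + ∑ t ∈ Finset.Icc 2 T, ‖y (t + 1) - ystar t (x t)‖ ^ 2 := by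
    rw [hS, show Finset.Icc 1 T = insert 1 (Finset.Icc 2 T) by
      ext n; simp only [Finset.mem_Icc, Finset.mem_insert]; omega,
      Finset.sum_insert (by simp)]
  -- e₁² ≤ ρ² D
  have he1D : ‖y 2 - ystar 1 (x 1)‖ ^ 2 ≤ ρ ^ 2 * D := by
    have h := hcontract 1 (Finset.mem_Icc.mpr ⟨le_refl 1, hT⟩)
    have h2 : (0:ℝ) ≤ ‖y (1 + 1) - ystar 1 (x 1)‖ := norm_nonneg _
    have hDnn : (0:ℝ) ≤ ‖y 1 - ystar 1 (x 1)‖ := norm_nonneg _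
    have := mul_self_le_mul_self h2 h
    rw [hD]
    nlinarith
  -- key inequality
  have key : (1 - c * ρ ^ 2) * S ≤ ρ ^ 2 * D + 6 * Ly ^ 2 * α ^ 2 * ρ ^ 2 * V
      + 3 * ρ ^ 2 * H := by linarith [sum2, hsplit, he1D]
  -- conclude
  have hrw : (1 + c * ρ ^ 2 / (1 - c * ρ ^ 2)) * ρ ^ 2 * D
      + 6 * Ly ^ 2 * α ^ 2 * ρ ^ 2 / (1 - c * ρ ^ 2) * V
      + 3 * ρ ^ 2 / (1 - c * ρ ^ 2) * H
      = (ρ ^ 2 * D + 6 * Ly ^ 2 * α ^ 2 * ρ ^ 2 * V + 3 * ρ ^ 2 * H) / (1 - c * ρ ^ 2) := by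
    field_simp
    ring
  rw [hrw, le_div_iff₀ h1]
  linarith [key]
end

section
/- Let M > 0, let w ≥ 1 be an integer, let u_0, u_1, …, u_{w-1} be reals with 1 = u_0 ≥ u_1 ≥ … ≥ u_{w-1} > 0, and set W := Σ_{i=0}^{w-1} u_i. Let T ≥ 1 and let b : ℤ × {1,…,T+1} → ℝ satisfy |b(s, τ)| ≤ M for all s, τ, and b(s, τ) = 0 whenever s ≤ 0. Define G(t, τ) := (1/W)·Σ_{i=0}^{w-1} u_i·b(t − i, τ). Then Σ_{t=1}^T ( G(t, t) − G(t, t+1) ) ≤ M·(2T + 1)/W + M. -/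
open Finset

lemma abel_id (n : ℕ) (u c : ℕ → ℝ) :
    ∑ i ∈ range (n+1), u i * (c i - c (i+1))
      = u 0 * c 0 - u n * c (n+1) + ∑ i ∈ range n, (u (i+1) - u i) * c (i+1) := by
  induction n with
  | zero => simp only [Finset.sum_range_succ, Finset.sum_range_zero, zero_add]; ring
  | succ n ih =>
    rw [Finset.sum_range_succ, ih, Finset.sum_range_succ (f := fun i => (u (i+1) - u i) * c (i+1))]
    ring

lemma abel_bound (M : ℝ) (hM : 0 ≤ M) (w : ℕ) (hw : 1 ≤ w)
    (u : ℕ → ℝ) (hu0 : u 0 = 1)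
    (hmono : ∀ i j, i ≤ j → j < w → u j ≤ u i)
    (hupos : ∀ i, i < w → 0 < u i)
    (c : ℕ → ℝ) (hc : ∀ i, |c i| ≤ M) :
    ∑ i ∈ range w, u i * (c i - c (i+1)) ≤ 2 * M := by
  obtain ⟨n, rfl⟩ : ∃ n, w = n + 1 := ⟨w - 1, by omega⟩
  rw [abel_id n u c]
  have hsum : ∑ i ∈ range n, (u i - u (i+1)) = u 0 - u n := Finset.sum_range_sub' u n
  have h1 : u 0 * c 0 ≤ M := by
    rw [hu0, one_mul]; exact (abs_le.mp (hc 0)).2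
  have h2 : -(u n * c (n+1)) ≤ u n * M := by
    have hu : 0 ≤ u n := le_of_lt (hupos _ (by omega))
    nlinarith [(abs_le.mp (hc (n+1))).1]
  have h3 : ∑ i ∈ range n, (u (i+1) - u i) * c (i+1)
      ≤ ∑ i ∈ range n, (u i - u (i+1)) * M := by
    apply Finset.sum_le_sum
    intro i hi
    have hi' : i + 1 < n + 1 := by simp at hi; omega
    have hmon : u (i+1) ≤ u i := hmono i (i+1) (by omega) hi'
    have hab := abs_le.mp (hc (i+1))
    nlinarith [hab.1, hab.2]
  have h4 : ∑ i ∈ range n, (u i - u (i+1)) * M = (u 0 - u n) * M := by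
    rw [← Finset.sum_mul, hsum]
  have hun : 0 < u n := hupos _ (by omega)
  nlinarith [h3]

/-- Sliding-window telescoping lemma for time-averaged objectives: with window size
`w`, nonincreasing weights `1 = u_0 ≥ … ≥ u_{w-1} > 0`, `W = Σ u_i`, and bounded
values `b(s, τ)` vanishing for `s ≤ 0`, the sum of the differences
`G(t,t) − G(t,t+1)` of the window averages `G(t,τ) = (1/W)·Σ_i u_i·b(t−i, τ)` is at
most `M(2T+1)/W + M`. -/
theorem sliding_window_telescoping
    (M : ℝ) (hM : 0 < M) (w : ℕ) (hw : 1 ≤ w)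
    (u : ℕ → ℝ) (hu0 : u 0 = 1)
    (hmono : ∀ i j, i ≤ j → j < w → u j ≤ u i)
    (hupos : ∀ i, i < w → 0 < u i)
    (T : ℕ) (hT : 1 ≤ T)
    (b : ℤ → ℕ → ℝ)
    (hbM : ∀ s : ℤ, ∀ τ ∈ Finset.Icc 1 (T + 1), |b s τ| ≤ M)
    (hb0 : ∀ s : ℤ, ∀ τ ∈ Finset.Icc 1 (T + 1), s ≤ 0 → b s τ = 0) :
    ∑ t ∈ Finset.Icc 1 T,
        ((1 / ∑ i ∈ Finset.range w, u i) *
            (∑ i ∈ Finset.range w, u i * b ((t : ℤ) - (i : ℤ)) t)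
          - (1 / ∑ i ∈ Finset.range w, u i) *
            ∑ i ∈ Finset.range w, u i * b ((t : ℤ) - (i : ℤ)) (t + 1))
      ≤ M * (2 * (T : ℝ) + 1) / (∑ i ∈ Finset.range w, u i) + M := by
  set W : ℝ := ∑ i ∈ Finset.range w, u i with hWdef
  set S : ℕ → ℕ → ℝ := fun t τ => ∑ i ∈ Finset.range w, u i * b ((t : ℤ) - (i : ℤ)) τ
    with hSdef
  have hW1 : 1 ≤ W := by
    rw [hWdef, ← hu0]
    exact Finset.single_le_sum (fun i hi => le_of_lt (hupos i (Finset.mem_range.mp hi)))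
      (Finset.mem_range.mpr (by omega))
  have hWpos : 0 < W := lt_of_lt_of_le one_pos hW1
  -- Step 1: factor out 1/W
  have h1 : ∑ t ∈ Finset.Icc 1 T,
        ((1 / W) * S t t - (1 / W) * S t (t + 1))
      = (1 / W) * ∑ t ∈ Finset.Icc 1 T, (S t t - S t (t + 1)) := by
    rw [Finset.mul_sum]
    exact Finset.sum_congr rfl fun t _ => by ring
  rw [h1]
  -- Step 2: per-term bound S (t+1) (t+1) - S t (t+1) ≤ 2M
  have hstep : ∀ t ∈ Finset.Icc 1 T, S (t+1) (t+1) - S t (t+1) ≤ 2 * M := by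
    intro t ht
    simp only [Finset.mem_Icc] at ht
    have hmem : t + 1 ∈ Finset.Icc 1 (T+1) := Finset.mem_Icc.mpr ⟨by omega, by omega⟩
    set c : ℕ → ℝ := fun i => b (((t:ℤ) + 1) - (i : ℤ)) (t+1) with hcdef
    have hc : ∀ i, |c i| ≤ M := fun i => hbM _ _ hmem
    have heq : S (t+1) (t+1) - S t (t+1) = ∑ i ∈ range w, u i * (c i - c (i+1)) := by
      rw [hSdef]
      simp only
      rw [← Finset.sum_sub_distrib]
      apply Finset.sum_congr rfl
      intro i _
      have e1 : ((t+1 : ℕ) : ℤ) - (i : ℤ) = ((t:ℤ) + 1) - (i : ℤ) := by push_cast; ring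
      have e2 : (t : ℤ) - (i : ℤ) = ((t:ℤ) + 1) - ((i+1 : ℕ) : ℤ) := by push_cast; ring
      rw [e1, e2, hcdef]
      ring
    rw [heq]
    exact abel_bound M (le_of_lt hM) w hw u hu0 hmono hupos c hc
  -- Step 3: telescoping
  have tel : ∑ t ∈ Finset.Icc 1 T, (S t t - S (t+1) (t+1)) = S 1 1 - S (T+1) (T+1) := by
    rw [← Finset.Ico_add_one_right_eq_Icc, Finset.sum_Ico_eq_sum_range]
    have := Finset.sum_range_sub' (f := fun n => S (1+n) (1+n)) (n := T)
    simpa [Nat.add_comm] using this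
  have hsum_le : ∑ t ∈ Finset.Icc 1 T, (S t t - S t (t + 1))
      ≤ S 1 1 - S (T+1) (T+1) + 2 * M * T := by
    have : ∑ t ∈ Finset.Icc 1 T, (S t t - S t (t + 1))
        ≤ ∑ t ∈ Finset.Icc 1 T, ((S t t - S (t+1) (t+1)) + 2 * M) := by
      apply Finset.sum_le_sum
      intro t ht
      have := hstep t ht
      linarith
    rw [Finset.sum_add_distrib, tel] at this
    simpa [Nat.card_Icc, mul_comm] using this
  -- Step 4: S 1 1 ≤ M
  have h11 : S 1 1 ≤ M := by
    have hmem1 : 1 ∈ Finset.Icc 1 (T+1) := Finset.mem_Icc.mpr ⟨le_refl _, by omega⟩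
    have : S 1 1 = u 0 * b 1 1 := by
      rw [hSdef]
      simp only
      apply Finset.sum_eq_single_of_mem 0 (Finset.mem_range.mpr (by omega))
      intro i _ hi0
      have : b ((1:ℤ) - (i:ℤ)) 1 = 0 := by
        apply hb0 _ _ hmem1
        have : (1:ℤ) ≤ (i:ℤ) := by exact_mod_cast Nat.one_le_iff_ne_zero.mpr hi0
        omega
      simp [this]
    rw [this, hu0, one_mul]
    calc b 1 1 ≤ |b 1 1| := le_abs_self _
      _ ≤ M := hbM _ _ hmem1
  -- Step 5: -S (T+1) (T+1) ≤ M * W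
  have hTT : -(M * W) ≤ S (T+1) (T+1) := by
    have hmemT : T + 1 ∈ Finset.Icc 1 (T+1) := Finset.mem_Icc.mpr ⟨by omega, le_refl _⟩
    have hneg : -(M * W) = ∑ i ∈ Finset.range w, -(M * u i) := by
      rw [hWdef, Finset.mul_sum]
      exact (Finset.sum_neg_distrib _).symm
    rw [hneg, hSdef]
    apply Finset.sum_le_sum
    intro i hi
    have hui : 0 < u i := hupos i (Finset.mem_range.mp hi)
    have := (abs_le.mp (hbM (((T+1:ℕ):ℤ) - (i:ℤ)) (T+1) hmemT)).1
    nlinarith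
  -- Final
  have hfin : (1/W) * ∑ t ∈ Finset.Icc 1 T, (S t t - S t (t + 1))
      ≤ (1/W) * (M + M * W + 2 * M * T) := by
    apply mul_le_mul_of_nonneg_left _ (by positivity)
    linarith
  have heq : (1/W) * (M + M * W + 2 * M * T) = M * (2 * (T:ℝ) + 1) / W + M := by
    field_simp
    ring
  linarith [hfin, heq ▸ hfin]
end
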